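/- arXiv:2603.01964 — 5 statements merged into one kernel-verified Lean document; each statement's English description precedes it below -/
import Mathlib

section
/- Let N < L, ρ = N/L, and |z| < r_0 := ρ^ρ (1−ρ)^{1−ρ}. Writing L_z and R_z for the left and right Bethe roots (roots of w^N(w+1)^{L−N} = z^L with Re(w) < −ρ, respectively Re(w) > −ρ), one has ∏_{u ∈ L_z} (−u)^N = ∏_{v ∈ R_z} (v+1)^{L−N}. -/
open Complex

/-- with `N < L`, `ρ = N/L`, `|z| < r₀ = ρ^ρ (1−ρ)^{1−ρ}`, and the Bethe
roots of `w^N (w+1)^{L−N} = z^L` split into the left roots `L_z` (with `Re w < −ρ`,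
`L−N` of them) and the right roots `R_z` (with `Re w > −ρ`, `N` of them), one has
`∏_{u∈L_z}(−u)^N = ∏_{v∈R_z}(v+1)^{L−N}`. -/
theorem statement3 (N L : ℕ) (hN : 0 < N) (hNL : N < L) (z : ℂ) (hz : z ≠ 0)
    (ρ : ℝ) (hρ : ρ = (N : ℝ) / L)
    (hzr : ‖z‖ < ρ ^ ρ * (1 - ρ) ^ (1 - ρ))
    (Lz Rz : Finset ℂ)
    (hLre : ∀ u ∈ Lz, u.re < -ρ) (hRre : ∀ v ∈ Rz, -ρ < v.re)
    (hRcard : Rz.card = N) (hLcard : Lz.card = L - N)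
    (hfac : ∀ w : ℂ,
      w ^ N * (w + 1) ^ (L - N) - z ^ L =
        (∏ u ∈ Lz, (w - u)) * (∏ v ∈ Rz, (w - v))) :
    ∏ u ∈ Lz, (-u) ^ N = ∏ v ∈ Rz, (v + 1) ^ (L - N) := by
  have hroot : ∀ v ∈ Rz, v ^ N * (v + 1) ^ (L - N) = z ^ L := by
    intro v hv
    have h := hfac v
    have h2 : (∏ v' ∈ Rz, (v - v')) = 0 :=
      Finset.prod_eq_zero hv (by ring)
    rw [h2, mul_zero, sub_eq_zero] at h
    exact h
  have hvne : ∀ v ∈ Rz, v ≠ 0 := by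
    intro v hv h0
    have h := hroot v hv
    rw [h0, zero_pow hN.ne', zero_mul] at h
    exact hz (pow_eq_zero_iff (Nat.pos_of_ne_zero (by omega)).ne' |>.mp h.symm)
  have h0 : (∏ u ∈ Lz, (-u)) * (∏ v ∈ Rz, (-v)) = -z ^ L := by
    have h := hfac 0
    rw [zero_pow hN.ne', zero_mul, zero_sub] at h
    simpa using h.symm
  set Q := ∏ v ∈ Rz, (-v) with hQdef
  have hQne : Q ≠ 0 := Finset.prod_ne_zero_iff.mpr fun v hv => neg_ne_zero.mpr (hvne v hv)
  have hpar : ((-1 : ℂ)) ^ (N * N) = (-1 : ℂ) ^ N := by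
    rcases Nat.even_or_odd N with h | h
    · rw [(h.mul_right N).neg_one_pow, h.neg_one_pow]
    · rw [(h.mul h).neg_one_pow, h.neg_one_pow]
  have hA : (∏ u ∈ Lz, (-u) ^ N) * Q ^ N = (-1 : ℂ) ^ N * z ^ (L * N) := by
    rw [Finset.prod_pow, ← mul_pow, h0, neg_pow, pow_mul]
  have hB : (∏ v ∈ Rz, (v + 1) ^ (L - N)) * Q ^ N = (-1 : ℂ) ^ N * z ^ (L * N) := by
    rw [hQdef, ← Finset.prod_pow, ← Finset.prod_mul_distrib]
    have key : ∀ v ∈ Rz, (v + 1) ^ (L - N) * (-v) ^ N = (-1 : ℂ) ^ N * z ^ L := by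
      intro v hv
      have h := hroot v hv
      rw [neg_pow]
      linear_combination ((-1 : ℂ) ^ N) * h
    rw [Finset.prod_congr rfl key, Finset.prod_const, hRcard, mul_pow, ← pow_mul, hpar,
      ← pow_mul]
  exact mul_right_cancel₀ (pow_ne_zero N hQne) (hA.trans hB.symm)
end

section
/- With notation as in the martingale lemma: for the hitting time τ := min{m ≥ 0 : G_m > y_{m+1}} of the strict epigraph of a configuration Y = (y_1,…,y_N) with y_N < ⋯ < y_1, and for any 1 ≤ i ≤ N and starting point x ∈ ℤ, E_{G_0=x}[ C(G_τ − y_i − 1, i − τ − 1) (1−ρ)^{G_τ} ((1−ρ)/ρ)^τ 1_{τ < i} ] = 1_{x ≥ y_i + i} C(x − y_i − 1, i − 1) (1−ρ)^x. -/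
open MeasureTheory ProbabilityTheory
open scoped Classical

def IsNegGeomWalk (ρ : ℝ) {Ω : Type*} [MeasurableSpace Ω] (μ : Measure Ω)
    (G : ℕ → Ω → ℤ) : Prop :=
  (∀ n, Measurable (G n)) ∧
  (∀ (n : ℕ) (j : ℤ), μ {ω | G (n + 1) ω - G n ω = j} =
      ENNReal.ofReal (if j ≤ -1 then ρ * (1 - ρ) ^ (-j - 1) else 0)) ∧
  iIndepFun (fun n : ℕ => fun ω => G (n + 1) ω - G n ω) μ

namespace S8

variable {Ω : Type*} [MeasurableSpace Ω]

/-- the integrand -/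
noncomputable def wInd (ρ : ℝ) (i : ℕ) (G : ℕ → Ω → ℤ) (y : ℕ → ℤ) (ω : Ω) : ℝ :=
  if _ : ∃ m, m < i ∧ y m < G m ω then
    (((G (sInf {m | y m < G m ω}) ω - y (i - 1) - 1).toNat.choose
        (i - sInf {m | y m < G m ω} - 1) : ℝ)) *
      (1 - ρ) ^ (G (sInf {m | y m < G m ω}) ω) *
      ((1 - ρ) / ρ) ^ (sInf {m | y m < G m ω})
  else 0

/-- the right-hand side -/
noncomputable def rhs (ρ : ℝ) (i : ℕ) (x : ℤ) (y : ℕ → ℤ) : ℝ :=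
  if y (i - 1) + i ≤ x then ((x - y (i - 1) - 1).toNat.choose (i - 1) : ℝ) * (1 - ρ) ^ x else 0

noncomputable def coefc (ρ : ℝ) (i : ℕ) (y : ℕ → ℤ) (m : ℕ) (g : ℤ) : ℝ :=
  ((g - y (i - 1) - 1).toNat.choose (i - m - 1) : ℝ) * (1 - ρ) ^ g * ((1 - ρ) / ρ) ^ m

def hitSet (G : ℕ → Ω → ℤ) (y : ℕ → ℤ) (m : ℕ) : Set Ω :=
  {ω | y m < G m ω ∧ ∀ k < m, G k ω ≤ y k}

lemma measurableSet_int (s : Set ℤ) : MeasurableSet s := s.to_countable.measurableSet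

lemma hitSet_measurable {G : ℕ → Ω → ℤ} (hG : ∀ n, Measurable (G n)) (y : ℕ → ℤ) (m : ℕ) :
    MeasurableSet (hitSet G y m) := by
  have : hitSet G y m = (G m ⁻¹' {g | y m < g}) ∩ ⋂ k ∈ Finset.range m, (G k ⁻¹' {g | g ≤ y k}) := by
    ext ω
    simp [hitSet, Set.mem_iInter, Finset.mem_range]
  rw [this]
  exact ((hG m) (measurableSet_int _)).inter
    (MeasurableSet.biInter (Set.to_countable _) fun k _ => (hG k) (measurableSet_int _))

/-- pointwise representation of `wInd` as a finite sum of indicators -/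
lemma wInd_rep (ρ : ℝ) (i : ℕ) (G : ℕ → Ω → ℤ) (y : ℕ → ℤ) (ω : Ω) :
    wInd ρ i G y ω =
      ∑ m ∈ Finset.range i,
        Set.indicator (hitSet G y m) (fun ω' => coefc ρ i y m (G m ω')) ω := by
  by_cases h : ∃ m, m < i ∧ y m < G m ω
  · obtain ⟨w, hwi, hw⟩ := h
    set t := sInf {m | y m < G m ω} with htdef
    have htS : y t < G t ω := Nat.sInf_mem (⟨w, hw⟩ : {m | y m < G m ω}.Nonempty)
    have htw : t ≤ w := Nat.sInf_le hw
    have hti : t < i := lt_of_le_of_lt htw hwi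
    have hhit : ω ∈ hitSet G y t := by
      refine ⟨htS, fun k hk => ?_⟩
      by_contra hc
      push_neg at hc
      have : t ≤ k := Nat.sInf_le (show k ∈ {m | y m < G m ω} from hc)
      omega
    rw [wInd, dif_pos ⟨w, hwi, hw⟩]
    rw [Finset.sum_eq_single t]
    · rw [Set.indicator_of_mem hhit, coefc]
    · intro m hm hmt
      apply Set.indicator_of_notMem
      intro hmem
      rcases lt_or_gt_of_ne hmt with hlt | hgt
      · have : t ≤ m := Nat.sInf_le (show m ∈ {m | y m < G m ω} from hmem.1)
        omega
      · exact absurd (hmem.2 t hgt) (not_le.mpr htS)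
    · intro hnot
      exact absurd (Finset.mem_range.mpr hti) hnot
  · rw [wInd, dif_neg h]
    symm
    apply Finset.sum_eq_zero
    intro m hm
    apply Set.indicator_of_notMem
    intro hmem
    exact h ⟨m, Finset.mem_range.mp hm, hmem.1⟩

/-- `wInd` only depends on the first `i` values of the walk -/
lemma wInd_congr {Ω' : Type*} [MeasurableSpace Ω'] (ρ : ℝ) (i : ℕ)
    {G : ℕ → Ω → ℤ} {H : ℕ → Ω' → ℤ} (y : ℕ → ℤ) {ω : Ω} {ω' : Ω'}
    (h : ∀ m < i, G m ω = H m ω') :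
    wInd ρ i G y ω = wInd ρ i H y ω' := by
  rw [wInd_rep, wInd_rep]
  refine Finset.sum_congr rfl fun m hm => ?_
  have hmi := Finset.mem_range.mp hm
  have hmem : ω ∈ hitSet G y m ↔ ω' ∈ hitSet H y m := by
    constructor <;> rintro ⟨h1, h2⟩
    · exact ⟨by rw [← h m hmi]; exact h1, fun k hk => by rw [← h k (by omega)]; exact h2 k hk⟩
    · exact ⟨by rw [h m hmi]; exact h1, fun k hk => by rw [h k (by omega)]; exact h2 k hk⟩
  by_cases hω : ω ∈ hitSet G y m
  · rw [Set.indicator_of_mem hω, Set.indicator_of_mem (hmem.mp hω), h m hmi]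
  · rw [Set.indicator_of_notMem hω, Set.indicator_of_notMem (fun hc => hω (hmem.mpr hc))]

lemma wInd_measurable (ρ : ℝ) (i : ℕ) {G : ℕ → Ω → ℤ} (hG : ∀ n, Measurable (G n)) (y : ℕ → ℤ) :
    Measurable (wInd ρ i G y) := by
  have : wInd ρ i G y = fun ω => ∑ m ∈ Finset.range i,
      Set.indicator (hitSet G y m) (fun ω' => coefc ρ i y m (G m ω')) ω := by
    funext ω; exact wInd_rep ρ i G y ω
  rw [this]
  refine Finset.measurable_sum _ fun m _ => ?_
  exact ((measurable_of_countable (coefc ρ i y m)).comp (hG m)).indicator (hitSet_measurable hG y m)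

end S8

namespace S8

lemma steps_le_ae (ρ : ℝ) {Ω : Type*} [MeasurableSpace Ω] {μ : Measure Ω}
    {G : ℕ → Ω → ℤ} (hG : IsNegGeomWalk ρ μ G) :
    ∀ᵐ ω ∂μ, ∀ n, G (n + 1) ω - G n ω ≤ -1 := by
  rw [ae_all_iff]
  intro n
  have hsub : {ω | ¬ (G (n+1) ω - G n ω ≤ -1)} ⊆
      ⋃ j : ℕ, {ω | G (n+1) ω - G n ω = (j : ℤ)} := by
    intro ω hω
    simp only [Set.mem_setOf_eq, not_le] at hω
    exact Set.mem_iUnion.mpr ⟨(G (n+1) ω - G n ω).toNat, by simp only [Set.mem_setOf_eq]; omega⟩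
  refine measure_mono_null hsub (measure_iUnion_null fun j => ?_)
  rw [hG.2.1 n (j : ℤ), if_neg (by omega), ENNReal.ofReal_zero]

lemma walk_le {Ω : Type*} {G : ℕ → Ω → ℤ} {ω : Ω} {x : ℤ} (h0 : G 0 ω = x)
    (hstep : ∀ n, G (n + 1) ω - G n ω ≤ -1) : ∀ m, G m ω ≤ x - m := by
  intro m
  induction m with
  | zero => simp [h0]
  | succ m ih => have := hstep m; push_cast; omega

lemma wInd_integrable (ρ : ℝ) {Ω : Type*} [MeasurableSpace Ω] (μ : Measure Ω)
    [IsProbabilityMeasure μ] {G : ℕ → Ω → ℤ} (hG : IsNegGeomWalk ρ μ G)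
    (y : ℕ → ℤ) (x : ℤ) (hstart : ∀ ω, G 0 ω = x) (i : ℕ) :
    Integrable (wInd ρ i G y) μ := by
  set B := ∑ m ∈ Finset.range i, ∑ g ∈ Finset.Icc (y m + 1) (x - m), |coefc ρ i y m g| with hB
  refine Integrable.mono' (integrable_const B)
    ((wInd_measurable ρ i hG.1 y).aestronglyMeasurable) ?_
  filter_upwards [steps_le_ae ρ hG] with ω hω
  rw [Real.norm_eq_abs, wInd_rep]
  refine le_trans (Finset.abs_sum_le_sum_abs _ _) (Finset.sum_le_sum fun m hm => ?_)
  by_cases hmem : ω ∈ hitSet G y m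
  · rw [Set.indicator_of_mem hmem]
    refine Finset.single_le_sum (fun g _ => abs_nonneg (coefc ρ i y m g)) ?_
    exact Finset.mem_Icc.mpr ⟨by have := hmem.1; omega, walk_le (hstart ω) hω m⟩
  · rw [Set.indicator_of_notMem hmem, abs_zero]
    exact Finset.sum_nonneg fun g _ => abs_nonneg _

/-- index-shift lemma: when the walk does not start above `y 0`. -/
lemma wInd_shift (ρ : ℝ) {Ω : Type*} [MeasurableSpace Ω] {i : ℕ} (hi : 2 ≤ i)
    (G : ℕ → Ω → ℤ) (y : ℕ → ℤ) (ω : Ω) (hx0 : ¬ y 0 < G 0 ω) :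
    wInd ρ i G y ω =
      ((1 - ρ) / ρ) * wInd ρ (i - 1) (fun n => G (n + 1)) (fun n => y (n + 1)) ω := by
  by_cases h : ∃ m, m < i - 1 ∧ y (m + 1) < G (m + 1) ω
  · obtain ⟨w, hwi, hw⟩ := h
    have hguard : ∃ m, m < i ∧ y m < G m ω := ⟨w + 1, by omega, hw⟩
    have hSne : ({m | y m < G m ω}).Nonempty := ⟨w + 1, hw⟩
    set t := sInf {m | y m < G m ω} with htdef
    have htS : y t < G t ω := Nat.sInf_mem hSne
    have ht0 : t ≠ 0 := fun hc => hx0 (by rw [← hc]; exact htS)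
    have hkey : sInf {m | y (m + 1) < G (m + 1) ω} = t - 1 := by
      apply le_antisymm
      · exact Nat.sInf_le (show t - 1 ∈ {m | y (m+1) < G (m+1) ω} by
          simp only [Set.mem_setOf_eq]
          have : t - 1 + 1 = t := by omega
          rw [this]; exact htS)
      · have hne' : ({m | y (m + 1) < G (m + 1) ω}).Nonempty := ⟨w, hw⟩
        have h1 : sInf {m | y (m+1) < G (m+1) ω} ∈ {m | y (m+1) < G (m+1) ω} := Nat.sInf_mem hne'
        have h2 : t ≤ sInf {m | y (m+1) < G (m+1) ω} + 1 :=
          Nat.sInf_le (show sInf {m | y (m+1) < G (m+1) ω} + 1 ∈ {m | y m < G m ω} from h1)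
        omega
    rw [wInd, wInd, dif_pos hguard, dif_pos ⟨w, hwi, hw⟩]
    simp only [← htdef, hkey]
    have e1 : t - 1 + 1 = t := by omega
    have e2 : i - 1 - 1 + 1 = i - 1 := by omega
    have e3 : i - t - 1 = i - 1 - (t - 1) - 1 := by omega
    rw [e1, e2, ← e3]
    have e4 : ((1 - ρ) / ρ) ^ t = ((1 - ρ) / ρ) * ((1 - ρ) / ρ) ^ (t - 1) := by
      conv_lhs => rw [← e1]
      rw [pow_succ]
      ring
    rw [e4]; ring
  · have hguard : ¬ ∃ m, m < i ∧ y m < G m ω := by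
      rintro ⟨m, hmi, hm⟩
      rcases Nat.eq_zero_or_pos m with rfl | hm0
      · exact hx0 hm
      · refine h ⟨m - 1, by omega, ?_⟩
        have e : m - 1 + 1 = m := by omega
        rw [e]; exact hm
    rw [wInd, wInd, dif_neg hguard, dif_neg h, mul_zero]

lemma iIndepFun_shift {Ω : Type*} [MeasurableSpace Ω] {μ : Measure Ω} {f : ℕ → Ω → ℤ}
    (h : iIndepFun f μ) :
    iIndepFun (fun n => f (n + 1)) μ := by
  rw [iIndepFun_iff_measure_inter_preimage_eq_mul] at h ⊢
  intro S sets hsets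
  have hinj : ∀ a ∈ S, ∀ b ∈ S, a + 1 = b + 1 → a = b := fun a _ b _ hab => by omega
  have h1 : (⋂ n ∈ S, f (n + 1) ⁻¹' sets n) =
      ⋂ k ∈ S.image (· + 1), f k ⁻¹' sets (k - 1) := by
    ext ω
    simp only [Set.mem_iInter, Finset.mem_image]
    constructor
    · rintro hω k ⟨n, hn, rfl⟩
      simpa using hω n hn
    · intro hω n hn
      simpa using hω (n + 1) ⟨n, hn, rfl⟩
  rw [h1, h (S.image (· + 1)) (sets := fun k => sets (k - 1))
    (fun k _ => measurableSet_int _), Finset.prod_image hinj]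
  exact Finset.prod_congr rfl fun n _ => by simp

end S8

namespace S8

set_option linter.unusedSectionVars false
set_option maxHeartbeats 1000000

lemma main (ρ : ℝ) (h0 : 0 < ρ) (h1 : ρ < 1) {Ω : Type*} [MeasurableSpace Ω]
    (μ : Measure Ω) [IsProbabilityMeasure μ] :
    ∀ (i : ℕ), 1 ≤ i → ∀ (G : ℕ → Ω → ℤ) (y : ℕ → ℤ) (x : ℤ),
      IsNegGeomWalk ρ μ G → (∀ m, m + 1 < i → y (m + 1) < y m) → (∀ ω, G 0 ω = x) →
      ∫ ω, wInd ρ i G y ω ∂μ = rhs ρ i x y := by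
  have h1ρ : (0:ℝ) < 1 - ρ := by linarith
  have hρ0 : ρ ≠ 0 := ne_of_gt h0
  have h1ρ0 : (1:ℝ) - ρ ≠ 0 := ne_of_gt h1ρ
  intro i
  induction i with
  | zero => intro h; omega
  | succ i ih =>
    intro _ G y x hG hy hstart
    by_cases hx : y 0 < x
    · -- the walk starts strictly above `y 0`, so `τ = 0`.
      have hptw : ∀ ω : Ω, wInd ρ (i+1) G y ω =
          ((x - y (i+1-1) - 1).toNat.choose (i+1-1) : ℝ) * (1 - ρ) ^ x := by
        intro ω
        have hg0 : y 0 < G 0 ω := by rw [hstart]; exact hx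
        have hguard : ∃ m, m < i+1 ∧ y m < G m ω := ⟨0, by omega, hg0⟩
        have hinf : sInf {m | y m < G m ω} = 0 :=
          Nat.eq_zero_of_le_zero (Nat.sInf_le (show (0:ℕ) ∈ {m | y m < G m ω} from hg0))
        rw [wInd, dif_pos hguard, hinf, hstart]
        simp
      rw [integral_congr_ae (Filter.Eventually.of_forall hptw), integral_const, probReal_univ,
        one_smul]
      have hchain : ∀ m : ℕ, m ≤ i → y m + m ≤ y 0 := by
        intro m hm
        induction m with
        | zero => simp
        | succ m ihm =>
          have h2 := hy m (by omega)
          have h3 := ihm (by omega)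
          push_cast
          push_cast at h3
          omega
      have hcond : y ((i+1) - 1) + ((i+1 : ℕ) : ℤ) ≤ x := by
        have := hchain i le_rfl
        simp only [Nat.add_sub_cancel]
        push_cast
        push_cast at this
        omega
      rw [rhs, if_pos hcond]
    · rcases Nat.eq_zero_or_pos i with rfl | hipos
      · -- base case i+1 = 1
        have hptw : ∀ ω : Ω, wInd ρ 1 G y ω = 0 := by
          intro ω
          rw [wInd, dif_neg]
          rintro ⟨m, hm1, hm⟩
          interval_cases m
          exact hx (by rw [← hstart ω]; exact hm)
        rw [integral_congr_ae (Filter.Eventually.of_forall hptw), integral_zero, rhs, if_neg]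
        simp only [Nat.sub_self, Nat.cast_one]
        omega
      · -- main inductive step: i ≥ 1, start not above y 0
        have hq : (0:ℝ) < (1 - ρ) / ρ := div_pos h1ρ h0
        set y' : ℕ → ℤ := fun n => y (n + 1) with hy'def
        set G' : ℕ → Ω → ℤ := fun n ω => G (n + 1) ω with hG'def
        have hshift : ∀ ω, wInd ρ (i+1) G y ω = ((1-ρ)/ρ) * wInd ρ i G' y' ω := by
          intro ω
          have := wInd_shift ρ (i := i+1) (by omega) G y ω (by rw [hstart]; exact hx)
          simpa using this
        have hInt : Integrable (wInd ρ (i+1) G y) μ := wInd_integrable ρ μ hG y x hstart (i+1)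
        have hInt' : Integrable (wInd ρ i G' y') μ := by
          have he : wInd ρ i G' y' = fun ω => (ρ/(1-ρ)) * wInd ρ (i+1) G y ω := by
            funext ω
            rw [hshift ω]
            field_simp
          rw [he]
          exact hInt.const_mul _
        have hmeas : ∀ j : ℤ, MeasurableSet {ω | G 1 ω - G 0 ω = j} := fun j =>
          ((hG.1 1).sub (hG.1 0)) (measurableSet_int {j} : MeasurableSet ({j} : Set ℤ))
        -- decompose over the first step
        have hdecomp : ∫ ω, wInd ρ i G' y' ω ∂μ =
            ∑' j : ℤ, ∫ ω in {ω | G 1 ω - G 0 ω = j}, wInd ρ i G' y' ω ∂μ := by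
          have hdisj : Pairwise (Function.onFun Disjoint fun j : ℤ => {ω | G 1 ω - G 0 ω = j}) := by
            intro a b hab
            simp only [Function.onFun, Set.disjoint_left, Set.mem_setOf_eq]
            intro ω ha hb
            exact hab (by omega)
          have hunion : (⋃ j : ℤ, {ω | G 1 ω - G 0 ω = j}) = Set.univ := by
            ext ω; simp
          rw [← setIntegral_univ, ← hunion,
            integral_iUnion hmeas hdisj (by rw [hunion]; exact hInt'.integrableOn)]
        have hstepmeas : ∀ n : ℕ, Measurable (fun ω => G (n+1) ω - G n ω) :=
          fun n => (hG.1 (n+1)).sub (hG.1 n)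
        have hy' : ∀ m, m + 1 < i → y' (m + 1) < y' m := fun m hm => hy (m+1) (by omega)
        have hj : ∀ j : ℤ, ∫ ω in {ω | G 1 ω - G 0 ω = j}, wInd ρ i G' y' ω ∂μ
            = (μ {ω | G 1 ω - G 0 ω = j}).toReal * rhs ρ i (x + j) y' := by
          intro j
          set Gj : ℕ → Ω → ℤ := fun n ω => x + j + (G (n+1) ω - G 1 ω) with hGjdef
          have hGjsteps : (fun n (ω : Ω) => Gj (n+1) ω - Gj n ω)
              = fun n ω => G (n+1+1) ω - G (n+1) ω := by
            funext n ω; simp only [hGjdef]; ring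
          have hGj : IsNegGeomWalk ρ μ Gj := by
            refine ⟨fun n => ((hG.1 (n+1)).sub (hG.1 1)).const_add _, fun n k => ?_, ?_⟩
            · have hset : {ω | Gj (n+1) ω - Gj n ω = k} = {ω | G (n+1+1) ω - G (n+1) ω = k} := by
                ext ω
                simp only [Set.mem_setOf_eq, hGjdef]
                constructor <;> intro h' <;> omega
              rw [hset]
              exact hG.2.1 (n+1) k
            · rw [hGjsteps]
              exact iIndepFun_shift hG.2.2
          have hstartj : ∀ ω, Gj 0 ω = x + j := fun ω => by simp [hGjdef]
          have heq : Set.EqOn (wInd ρ i G' y') (wInd ρ i Gj y') {ω | G 1 ω - G 0 ω = j} := by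
            intro ω hω
            refine wInd_congr ρ i y' fun m hm => ?_
            simp only [Set.mem_setOf_eq] at hω
            have hG1 : G 1 ω = x + j := by have := hstart ω; omega
            simp only [hG'def, hGjdef, hG1]
            ring
          rw [setIntegral_congr_fun (hmeas j) heq, ← integral_indicator (hmeas j)]
          have hprod : Set.indicator {ω | G 1 ω - G 0 ω = j} (wInd ρ i Gj y')
              = fun ω => Set.indicator {ω | G 1 ω - G 0 ω = j} (fun _ => (1:ℝ)) ω
                  * wInd ρ i Gj y' ω := by
            funext ω
            by_cases hω : ω ∈ {ω | G 1 ω - G 0 ω = j}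
            · simp [hω]
            · simp [hω]
          rw [hprod]
          have hindep : IndepFun (Set.indicator {ω | G 1 ω - G 0 ω = j} (fun _ => (1:ℝ)))
              (wInd ρ i Gj y') μ := by
            classical
            set T : Finset ℕ := Finset.image (· + 1) (Finset.range i) with hT
            have hST : Disjoint ({0} : Finset ℕ) T := by
              simp only [Finset.disjoint_left, Finset.mem_singleton, hT, Finset.mem_image]
              rintro a rfl ⟨n, _, hn⟩
              omega
            have hbase := hG.2.2.indepFun_finset {0} T hST hstepmeas
            set φ : (({0} : Finset ℕ) → ℤ) → ℝ :=
              fun v => if v ⟨0, Finset.mem_singleton_self 0⟩ = j then (1:ℝ) else 0 with hφ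
            set W : ℕ → ({k // k ∈ T} → ℤ) → ℤ := fun n v =>
              x + j + ∑ k ∈ Finset.range n, (if h : k + 1 ∈ T then v ⟨k+1, h⟩ else 0) with hW
            set ψ : ({k // k ∈ T} → ℤ) → ℝ := fun v => wInd ρ i W y' v with hψ
            have hcomp := hbase.comp (measurable_of_countable φ) (measurable_of_countable ψ)
            refine hcomp.congr (Filter.Eventually.of_forall fun ω => ?_)
              (Filter.Eventually.of_forall fun ω => ?_)
            · by_cases hω : G (0+1) ω - G 0 ω = j
              · simp only [Function.comp_apply, hφ]
                rw [if_pos hω, Set.indicator_of_mem (show ω ∈ {ω | G 1 ω - G 0 ω = j} by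
                  simpa using hω)]
              · simp only [Function.comp_apply, hφ]
                rw [if_neg hω, Set.indicator_of_notMem (show ω ∉ {ω | G 1 ω - G 0 ω = j} by
                  simpa using hω)]
            · simp only [Function.comp_apply, hψ]
              refine wInd_congr ρ i y' fun m hm => ?_
              simp only [hW, hGjdef]
              have hsum : ∑ k ∈ Finset.range m,
                  (if h : k + 1 ∈ T then
                    (fun (k' : {k // k ∈ T}) => G ((k':ℕ)+1) ω - G (k':ℕ) ω) ⟨k+1, h⟩ else 0)
                  = G (m+1) ω - G 1 ω := by
                have hterm : ∀ k ∈ Finset.range m,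
                    (if h : k + 1 ∈ T then
                      (fun (k' : {k // k ∈ T}) => G ((k':ℕ)+1) ω - G (k':ℕ) ω) ⟨k+1, h⟩ else 0)
                    = G (k+1+1) ω - G (k+1) ω := by
                  intro k hk
                  have hkm := Finset.mem_range.mp hk
                  have hkT : k + 1 ∈ T := by
                    simp only [hT, Finset.mem_image]
                    exact ⟨k, Finset.mem_range.mpr (by omega), rfl⟩
                  rw [dif_pos hkT]
                rw [Finset.sum_congr rfl hterm]
                exact Finset.sum_range_sub (fun k => G (k+1) ω) m
              rw [hsum]
          rw [hindep.integral_fun_mul_eq_mul_integral ((measurable_const.indicator (hmeas j)).aestronglyMeasurable)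
            ((wInd_measurable ρ i hGj.1 y').aestronglyMeasurable),
            integral_indicator_const (1:ℝ) (hmeas j), smul_eq_mul, mul_one,
            ih hipos Gj y' (x+j) hGj hy' hstartj]
          rfl
        have hlaw : ∀ j : ℤ, (μ {ω | G 1 ω - G 0 ω = j}).toReal
            = if j ≤ -1 then ρ * (1-ρ)^(-j-1) else 0 := by
          intro j
          rw [hG.2.1 0 j, ENNReal.toReal_ofReal]
          split_ifs
          · positivity
          · exact le_refl 0
        rw [integral_congr_ae (Filter.Eventually.of_forall hshift), integral_const_mul, hdecomp,
          tsum_congr hj, ← tsum_mul_left]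
        have hrhs' : ∀ j : ℤ, rhs ρ i (x+j) y' =
            if y i + (i:ℤ) ≤ x + j then
              ((x + j - y i - 1).toNat.choose (i-1) : ℝ) * (1-ρ)^(x+j) else 0 := by
          intro j
          rw [rhs]
          have hyi : y' (i-1) = y i := by
            simp only [hy'def]
            congr 1
            omega
          rw [hyi]
        set F : Finset ℤ := Finset.Icc (y i + i - x) (-1) with hF
        have hsupp : ∀ j ∉ F,
            (1-ρ)/ρ * ((μ {ω | G 1 ω - G 0 ω = j}).toReal * rhs ρ i (x+j) y') = 0 := by
          intro j hj'
          simp only [hF, Finset.mem_Icc, not_and, not_le] at hj'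
          by_cases hj1 : j ≤ -1
          · rw [hrhs' j, if_neg (by have := hj'; intro hc; omega)]
            simp
          · rw [hlaw j, if_neg hj1]
            simp
        rw [tsum_eq_sum hsupp]
        by_cases hcond : y i + ((i:ℤ)+1) ≤ x
        · have hterm : ∀ j ∈ F,
              (1-ρ)/ρ * ((μ {ω | G 1 ω - G 0 ω = j}).toReal * rhs ρ i (x+j) y')
              = ((x + j - y i - 1).toNat.choose (i-1) : ℝ) * (1-ρ)^x := by
            intro j hjF
            simp only [hF, Finset.mem_Icc] at hjF
            rw [hlaw j, if_pos (by omega), hrhs' j, if_pos (by omega)]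
            have step1 : (1-ρ)/ρ * (ρ * (1-ρ)^(-j-1) *
                (((x + j - y i - 1).toNat.choose (i-1) : ℝ) * (1-ρ)^(x+j)))
                = ((x + j - y i - 1).toNat.choose (i-1) : ℝ) *
                  (((1-ρ)/ρ * ρ) * ((1-ρ)^(-j-1) * (1-ρ)^(x+j))) := by ring
            rw [step1, div_mul_cancel₀ _ hρ0, ← zpow_add₀ h1ρ0, ← zpow_one_add₀ h1ρ0]
            congr 2
            ring
          rw [Finset.sum_congr rfl hterm, ← Finset.sum_mul]
          have hnat : ∑ j ∈ F, (x + j - y i - 1).toNat.choose (i-1)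
              = (x - y i - 1).toNat.choose i := by
            have hbij : ∑ j ∈ F, (x + j - y i - 1).toNat.choose (i-1)
                = ∑ n ∈ Finset.Icc (i-1) ((x - y i - 2).toNat), n.choose (i-1) := by
              refine Finset.sum_nbij' (fun j => (x + j - y i - 1).toNat)
                (fun n => (n:ℤ) + y i + 1 - x) ?_ ?_ ?_ ?_ ?_
              · intro a ha
                simp only [hF, Finset.mem_Icc] at ha
                simp only [Finset.mem_Icc]
                omega
              · intro a ha
                simp only [Finset.mem_Icc] at ha
                simp only [hF, Finset.mem_Icc]
                omega
              · intro a ha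
                simp only [hF, Finset.mem_Icc] at ha
                omega
              · intro a ha
                simp only [Finset.mem_Icc] at ha
                omega
              · intro a ha
                rfl
            rw [hbij, Nat.sum_Icc_choose]
            congr 1 <;> omega
          have hcast : ∑ j ∈ F, (((x + j - y i - 1).toNat.choose (i-1) : ℝ))
              = ((x - y i - 1).toNat.choose i : ℝ) := by
            rw [← Nat.cast_sum, hnat]
          rw [hcast, rhs, if_pos (by
            simp only [Nat.add_sub_cancel]
            push_cast
            omega)]
          simp only [Nat.add_sub_cancel]
        · have hFempty : F = ∅ := by
            rw [hF]
            apply Finset.Icc_eq_empty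
            omega
          rw [hFempty, Finset.sum_empty, rhs, if_neg (by
            simp only [Nat.add_sub_cancel]
            push_cast
            omega)]

end S8

/-- optional-stopping identity.  Here `y k` denotes `y_{k+1}` (0-based), so
`Y = (y_1,…,y_N)` is strictly decreasing, `τ = min{m ≥ 0 : G_m > y_{m+1}}`, and for
`1 ≤ i ≤ N` and start `G_0 = x`,
`E[ C(G_τ−y_i−1, i−τ−1) (1−ρ)^{G_τ} ((1−ρ)/ρ)^τ 1_{τ<i} ]
  = 1_{x ≥ y_i+i} C(x−y_i−1, i−1) (1−ρ)^x`. -/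
theorem statement8 (ρ : ℝ) (h0 : 0 < ρ) (h1 : ρ < 1)
    {Ω : Type*} [MeasurableSpace Ω] (μ : Measure Ω) [IsProbabilityMeasure μ]
    (G : ℕ → Ω → ℤ) (hG : IsNegGeomWalk ρ μ G)
    (N : ℕ) (hN : 1 ≤ N) (y : ℕ → ℤ)
    (hy : ∀ m, m + 1 < N → y (m + 1) < y m)
    (x : ℤ) (hstart : ∀ ω, G 0 ω = x)
    (i : ℕ) (hi1 : 1 ≤ i) (hiN : i ≤ N) :
    ∫ ω, (if _ : ∃ m, m < i ∧ y m < G m ω then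
        (((G (sInf {m | y m < G m ω}) ω - y (i - 1) - 1).toNat.choose
            (i - sInf {m | y m < G m ω} - 1) : ℝ)) *
          (1 - ρ) ^ (G (sInf {m | y m < G m ω}) ω) *
          ((1 - ρ) / ρ) ^ (sInf {m | y m < G m ω})
      else 0) ∂μ =
    (if y (i - 1) + i ≤ x then
        ((x - y (i - 1) - 1).toNat.choose (i - 1) : ℝ) * (1 - ρ) ^ x
      else 0) := by
  exact S8.main ρ h0 h1 μ i hi1 G y x hG (fun m hm => hy m (by omega)) hstart
end

section
/- Let P be the N×N upper-triangular matrix with entries P(i,j) = ∮_0 v^{i−j}(v+1)^{y_j+j} F(v) dv/(2πi v), where F is analytic at 0 with F(0)=1 and the contour is a small circle around 0. Then P is invertible, and its inverse is given by P^{-1}(i,j) = ∮_0 e_i(v) v^{−j} F(v)^{−1} dv/(2πi), where {e_i}_{1≤i≤N} is the unique family of polynomials with deg e_i < N, e_i(v) = Σ_{j=i}^N c_{i,j} v^{j−1}, satisfying the biorthogonality ∮_0 e_i(v) v^{−j} (v+1)^{y_j+j} dv/(2πi) = δ_{ij} for 1 ≤ i,j ≤ N. -/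
open Complex Metric Finset

namespace St10

noncomputable def cc (r : ℝ) (n : ℕ) (g : ℂ → ℂ) : ℂ :=
  (2 * Real.pi * Complex.I)⁻¹ * circleIntegral (fun v => g v * v ^ (-(n : ℤ) - 1)) 0 r

lemma twopiI_ne : (2 * (Real.pi : ℂ) * Complex.I) ≠ 0 := by
  simp [Real.pi_ne_zero, Complex.I_ne_zero, Complex.ofReal_ne_zero]

lemma sphere_ne_zero {r : ℝ} (hr : 0 < r) {v : ℂ} (hv : v ∈ sphere (0:ℂ) r) : v ≠ 0 := by
  intro h; rw [mem_sphere_iff_norm, h] at hv; simp at hv; exact absurd hv.symm hr.ne'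

lemma cauchy0 {r : ℝ} (hr : 0 ≤ r) {g : ℂ → ℂ} (hg : AnalyticOnNhd ℂ g (closedBall 0 r)) :
    circleIntegral g 0 r = 0 :=
  Complex.circleIntegral_eq_zero_of_differentiable_on_off_countable hr Set.countable_empty
    hg.continuousOn (fun z hz => (hg z (ball_subset_closedBall hz.1)).differentiableAt)

lemma ccval {r : ℝ} (hr : 0 < r) {g : ℂ → ℂ} (hg : AnalyticOnNhd ℂ g (closedBall 0 r)) :
    cc r 0 g = g 0 := by
  have hd : DiffContOnCl ℂ g (ball (0:ℂ) r) :=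
    ⟨hg.differentiableOn.mono ball_subset_closedBall,
     hg.continuousOn.mono closure_ball_subset_closedBall⟩
  have h := hd.circleIntegral_sub_inv_smul (w := 0) (by simpa using hr)
  have he : (fun v : ℂ => g v * v ^ (-(0:ℕ) - 1 : ℤ)) = fun v => (v - 0)⁻¹ • g v := by
    funext v; simp [smul_eq_mul, mul_comm]
  rw [cc, he, h, smul_eq_mul, ← mul_assoc, inv_mul_cancel₀ twopiI_ne, one_mul]


lemma ccint {r : ℝ} (hr : 0 < r) {g : ℂ → ℂ} (hg : ContinuousOn g (sphere 0 r)) (m : ℤ) :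
    CircleIntegrable (fun v => g v * v ^ m) 0 r := by
  refine ContinuousOn.circleIntegrable hr.le (hg.mul ?_)
  exact fun v hv => ((continuousAt_id.zpow₀ m (Or.inl (sphere_ne_zero hr hv))).continuousWithinAt)

lemma ccshift {r : ℝ} (hr : 0 < r) (m n : ℕ) (g : ℂ → ℂ) :
    cc r (n + m) (fun v => v ^ m * g v) = cc r n g := by
  unfold cc
  congr 1
  refine circleIntegral.integral_congr hr.le (fun v hv => ?_)
  have hv0 : v ≠ 0 := sphere_ne_zero hr hv
  have h1 : v ^ m * g v * v ^ (-((n + m : ℕ) : ℤ) - 1) =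
      g v * (v ^ (m : ℤ) * v ^ (-((n + m : ℕ) : ℤ) - 1)) := by
    rw [zpow_natCast]; ring
  rw [h1, ← zpow_add₀ hv0]
  congr 2
  push_cast; ring

lemma ccvanish {r : ℝ} (hr : 0 < r) {n k : ℕ} (hk : n < k) {g : ℂ → ℂ}
    (hg : AnalyticOnNhd ℂ g (closedBall 0 r)) :
    cc r n (fun v => v ^ k * g v) = 0 := by
  unfold cc
  have h : circleIntegral (fun v => v ^ k * g v * v ^ (-(n : ℤ) - 1)) 0 r
      = circleIntegral (fun v => v ^ (k - n - 1) * g v) 0 r := by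
    refine circleIntegral.integral_congr hr.le (fun v hv => ?_)
    have hv0 : v ≠ 0 := sphere_ne_zero hr hv
    have h1 : v ^ k * g v * v ^ (-(n : ℤ) - 1) =
        g v * (v ^ (k : ℤ) * v ^ (-(n : ℤ) - 1)) := by rw [zpow_natCast]; ring
    have h2 : v ^ (k - n - 1 : ℕ) * g v = g v * v ^ ((k - n - 1 : ℕ) : ℤ) := by
      rw [zpow_natCast]; ring
    rw [h1, h2, ← zpow_add₀ hv0]
    congr 2
    have : ((k - n - 1 : ℕ) : ℤ) = (k : ℤ) - n - 1 := by omega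
    rw [this]; ring
  rw [h, cauchy0 hr.le ((analyticOnNhd_id.fun_pow _).mul hg), mul_zero]

lemma ccmonomul {r : ℝ} (hr : 0 < r) (n k : ℕ) {w : ℂ → ℂ}
    (hw : AnalyticOnNhd ℂ w (closedBall 0 r)) :
    cc r n (fun v => v ^ k * w v) = if k ≤ n then cc r (n - k) w else 0 := by
  split
  · next h =>
      have h2 : cc r ((n - k) + k) (fun v => v ^ k * w v) = cc r (n - k) w := ccshift hr k (n-k) w
      rw [show (n - k) + k = n by omega] at h2
      rw [h2]
  · next h => exact ccvanish hr (by omega) hw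

lemma ccsum {r : ℝ} {n : ℕ} {ι : Type*} (s : Finset ι) (f : ι → ℂ → ℂ)
    (h : ∀ i ∈ s, CircleIntegrable (fun v => f i v * v ^ (-(n : ℤ) - 1)) 0 r) :
    cc r n (fun v => ∑ i ∈ s, f i v) = ∑ i ∈ s, cc r n (f i) := by
  unfold cc
  rw [← Finset.mul_sum]
  congr 1
  have he : (fun v : ℂ => (∑ i ∈ s, f i v) * v ^ (-(n : ℤ) - 1)) =
      fun v => ∑ i ∈ s, f i v * v ^ (-(n : ℤ) - 1) := by
    funext v; rw [Finset.sum_mul]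
  rw [he]
  simp only [circleIntegral, Finset.smul_sum]
  rw [intervalIntegral.integral_finset_sum]
  exact fun i hi => (h i hi).out

lemma ccconst {r : ℝ} (n : ℕ) (a : ℂ) (f : ℂ → ℂ) :
    cc r n (fun v => a * f v) = a * cc r n f := by
  unfold cc
  have he : (fun v : ℂ => a * f v * v ^ (-(n : ℤ) - 1)) =
      fun v => a * (f v * v ^ (-(n : ℤ) - 1)) := by funext v; ring
  rw [he, circleIntegral.integral_const_mul]; ring

lemma ccsub {r : ℝ} {n : ℕ} {f g : ℂ → ℂ}
    (hf : CircleIntegrable (fun v => f v * v ^ (-(n : ℤ) - 1)) 0 r)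
    (hg : CircleIntegrable (fun v => g v * v ^ (-(n : ℤ) - 1)) 0 r) :
    cc r n (fun v => f v - g v) = cc r n f - cc r n g := by
  unfold cc
  have he : (fun v : ℂ => (f v - g v) * v ^ (-(n : ℤ) - 1)) =
      fun v => f v * v ^ (-(n : ℤ) - 1) - g v * v ^ (-(n : ℤ) - 1) := by funext v; ring
  rw [he, circleIntegral.integral_sub hf hg]; ring


lemma factor1 {r : ℝ} (hr : 0 < r) {h : ℂ → ℂ}
    (hh : AnalyticOnNhd ℂ h (closedBall 0 r)) (h0 : h 0 = 0) :
    ∃ g : ℂ → ℂ, AnalyticOnNhd ℂ g (closedBall 0 r) ∧ ∀ v, h v = v * g v := by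
  refine ⟨dslope h 0, ?_, fun v => ?_⟩
  · intro z hz
    by_cases hz0 : z = 0
    · subst hz0
      obtain ⟨p, hp⟩ := hh 0 (mem_closedBall_self hr.le)
      exact hp.has_fpower_series_dslope_fslope.analyticAt
    · have ha : AnalyticAt ℂ (fun w => (w - 0)⁻¹ • (h w - h 0)) z := by
        refine AnalyticAt.fun_smul ?_ ?_
        · exact ((analyticAt_id.sub analyticAt_const).inv (by simpa using hz0))
        · exact (hh z hz).sub analyticAt_const
      refine ha.congr ?_
      filter_upwards [eventually_ne_nhds hz0] with w hw
      rw [dslope_of_ne _ hw]; rfl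
  · have := sub_smul_dslope h 0 v
    rw [h0, sub_zero, sub_zero, smul_eq_mul] at this
    exact this.symm

lemma factor {r : ℝ} (hr : 0 < r) : ∀ (j : ℕ) (h : ℂ → ℂ),
    AnalyticOnNhd ℂ h (closedBall 0 r) → (∀ k, k ≤ j → cc r k h = 0) →
    ∃ g : ℂ → ℂ, AnalyticOnNhd ℂ g (closedBall 0 r) ∧ ∀ v, h v = v ^ (j + 1) * g v := by
  intro j
  induction j with
  | zero =>
      intro h hh hz
      have h0 : h 0 = 0 := by rw [← ccval hr hh]; exact hz 0 le_rfl
      obtain ⟨g, hg, hgv⟩ := factor1 hr hh h0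
      exact ⟨g, hg, fun v => by rw [pow_one]; exact hgv v⟩
  | succ j ih =>
      intro h hh hz
      have h0 : h 0 = 0 := by rw [← ccval hr hh]; exact hz 0 (by omega)
      obtain ⟨g, hg, hgv⟩ := factor1 hr hh h0
      have hfun : h = fun v => v ^ 1 * g v := by funext v; rw [pow_one]; exact hgv v
      have hzg : ∀ k, k ≤ j → cc r k g = 0 := by
        intro k hk
        have := hz (k + 1) (by omega)
        rw [hfun] at this
        rwa [ccshift hr 1 k g] at this
      obtain ⟨g', hg', hgv'⟩ := ih g hg hzg
      refine ⟨g', hg', fun v => ?_⟩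
      rw [hgv v, hgv' v]; ring

lemma cczero {r : ℝ} (hr : 0 < r) (j : ℕ) {h w : ℂ → ℂ}
    (hh : AnalyticOnNhd ℂ h (closedBall 0 r)) (hw : AnalyticOnNhd ℂ w (closedBall 0 r))
    (hz : ∀ k, k ≤ j → cc r k h = 0) :
    cc r j (fun v => h v * w v) = 0 := by
  obtain ⟨g, hg, hgv⟩ := factor hr j h hh hz
  have hfun : (fun v => h v * w v) = fun v => v ^ (j + 1) * (g v * w v) := by
    funext v; rw [hgv v]; ring
  rw [hfun]
  exact ccvanish hr (by omega) (hg.mul hw)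

lemma ccmono {r : ℝ} (hr : 0 < r) (n m : ℕ) :
    cc r n (fun v => v ^ m) = if m = n then 1 else 0 := by
  have h1 : (fun v : ℂ => v ^ m) = fun v => v ^ m * (fun _ : ℂ => (1:ℂ)) v := by
    funext v; simp
  rw [h1, ccmonomul hr n m analyticOnNhd_const]
  by_cases hmn : m = n
  · subst hmn
    simp only [le_rfl, if_pos, Nat.sub_self, if_pos rfl]
    rw [ccval hr analyticOnNhd_const]
  · rw [if_neg hmn]
    by_cases hle : m ≤ n
    · rw [if_pos hle]
      have hnm : 1 ≤ n - m := by omega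
      unfold cc
      have he : (fun v : ℂ => (fun _ : ℂ => (1:ℂ)) v * v ^ (-((n - m : ℕ) : ℤ) - 1)) =
          fun v : ℂ => (v - 0) ^ (-((n - m : ℕ) : ℤ) - 1) := by
        funext v; rw [one_mul, sub_zero]
      rw [he, circleIntegral.integral_sub_zpow_of_ne (by omega) 0 0 r, mul_zero]
    · rw [if_neg hle]


lemma ccpoly {r : ℝ} (hr : 0 < r) (n M : ℕ) (c : ℕ → ℂ) {w : ℂ → ℂ}
    (hw : ContinuousOn w (sphere 0 r)) :
    cc r n (fun v => (∑ k ∈ range M, c k * v ^ k) * w v)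
      = ∑ k ∈ range M, c k * cc r n (fun v => v ^ k * w v) := by
  have he : (fun v : ℂ => (∑ k ∈ range M, c k * v ^ k) * w v)
      = fun v => ∑ k ∈ range M, c k * (v ^ k * w v) := by
    funext v; rw [Finset.sum_mul]; exact Finset.sum_congr rfl (fun k _ => by ring)
  rw [he, ccsum (range M) (fun k v => c k * (v ^ k * w v)) ?_]
  · exact Finset.sum_congr rfl (fun k _ => ccconst n (c k) _)
  · intro k _
    exact ccint hr (continuousOn_const.mul (((continuousOn_id).pow k).mul hw)) _

lemma ccpolycoeff {r : ℝ} (hr : 0 < r) (n M : ℕ) (hnM : n < M) (c : ℕ → ℂ) :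
    cc r n (fun v => ∑ k ∈ range M, c k * v ^ k) = c n := by
  rw [ccsum (range M) (fun k v => c k * v ^ k) ?_]
  · have : ∀ k ∈ range M, cc r n (fun v => c k * v ^ k)
        = c k * (if k = n then 1 else 0) := by
      intro k _
      rw [ccconst n (c k) (fun v => v ^ k), ccmono hr n k]
    rw [Finset.sum_congr rfl this]
    simp only [mul_ite, mul_one, mul_zero, Finset.sum_ite_eq']
    rw [if_pos (Finset.mem_range.mpr hnM)]
  · intro k _
    exact ccint hr (continuousOn_const.mul ((continuousOn_id).pow k)) _

lemma ccpolymul {r : ℝ} (hr : 0 < r) (n M : ℕ) (c : ℕ → ℂ) {w : ℂ → ℂ}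
    (hw : AnalyticOnNhd ℂ w (closedBall 0 r)) :
    cc r n (fun v => (∑ k ∈ range M, c k * v ^ k) * w v)
      = ∑ k ∈ range M, c k * (if k ≤ n then cc r (n - k) w else 0) := by
  rw [ccpoly hr n M c (hw.continuousOn.mono sphere_subset_closedBall)]
  exact Finset.sum_congr rfl (fun k _ => by rw [ccmonomul hr n k hw])


lemma polyAnalytic (p : Polynomial ℂ) (s : Set ℂ) : AnalyticOnNhd ℂ (fun v => p.eval v) s := by
  have := (analyticOnNhd_id (𝕜 := ℂ) (s := s)).aeval_polynomial p
  simpa using this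

end St10

open St10

/-- the matrix `P(i,j) = ∮_0 v^{i−j}(v+1)^{y_j+j} F(v) dv/(2πi v)` (over a
small circle of radius `r` around `0`, `F` analytic and nonvanishing there with `F(0)=1`)
is invertible with inverse `P⁻¹(i,j) = ∮_0 e_i(v) v^{−j} F(v)⁻¹ dv/(2πi)`, where
`{e_i}` is the unique family of polynomials with `deg e_i < N`,
`e_i(v) = Σ_{j=i}^N c_{i,j} v^{j−1}` (i.e. the low-order coefficients vanish), satisfying
the biorthogonality `∮_0 e_i(v) v^{−j}(v+1)^{y_j+j} dv/(2πi) = δ_{ij}`.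
Indices here are 0-based: row/column `i` corresponds to the paper's `i+1`. -/
theorem statement10 (N : ℕ) (hN : 0 < N) (y : Fin N → ℤ)
    (F : ℂ → ℂ) (hF0 : F 0 = 1)
    (r : ℝ) (hr : 0 < r) (hr1 : r < 1)
    (hFan : ∀ v ∈ Metric.closedBall (0 : ℂ) r, AnalyticAt ℂ F v)
    (hFne : ∀ v ∈ Metric.closedBall (0 : ℂ) r, F v ≠ 0)
    (e : Fin N → Polynomial ℂ)
    (hdeg : ∀ i, (e i).degree < (N : ℕ))
    (hstruct : ∀ i : Fin N, ∀ k, k < (i : ℕ) → (e i).coeff k = 0)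
    (hbi : ∀ i j : Fin N,
      (2 * Real.pi * Complex.I)⁻¹ *
        circleIntegral (fun v => (e i).eval v * v ^ (-(j : ℤ) - 1) *
          (v + 1) ^ (y j + (j : ℤ) + 1)) 0 r = if i = j then 1 else 0) :
    let P : Matrix (Fin N) (Fin N) ℂ := Matrix.of fun i j =>
      (2 * Real.pi * Complex.I)⁻¹ *
        circleIntegral (fun v => v ^ ((i : ℤ) - (j : ℤ)) *
          (v + 1) ^ (y j + (j : ℤ) + 1) * F v / v) 0 r
    let Q : Matrix (Fin N) (Fin N) ℂ := Matrix.of fun i j =>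
      (2 * Real.pi * Complex.I)⁻¹ *
        circleIntegral (fun v => (e i).eval v * v ^ (-(j : ℤ) - 1) / F v) 0 r
    P * Q = 1 ∧ Q * P = 1 ∧
    (∀ e' : Fin N → Polynomial ℂ,
      (∀ i, (e' i).degree < (N : ℕ)) →
      (∀ i : Fin N, ∀ k, k < (i : ℕ) → (e' i).coeff k = 0) →
      (∀ i j : Fin N,
        (2 * Real.pi * Complex.I)⁻¹ *
          circleIntegral (fun v => (e' i).eval v * v ^ (-(j : ℤ) - 1) *
            (v + 1) ^ (y j + (j : ℤ) + 1)) 0 r = if i = j then 1 else 0) →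
      e' = e) := by
  intro P Q
  have hsub : Metric.sphere (0:ℂ) r ⊆ Metric.closedBall (0:ℂ) r :=
    Metric.sphere_subset_closedBall
  have hFanOn : AnalyticOnNhd ℂ F (Metric.closedBall 0 r) := hFan
  have hne1 : ∀ v ∈ Metric.closedBall (0:ℂ) r, v + 1 ≠ 0 := by
    intro v hv h
    have hv1 : v = -1 := by linear_combination h
    rw [Metric.mem_closedBall, hv1] at hv
    simp [Complex.dist_eq] at hv
    linarith
  have hGan : ∀ j : Fin N,
      AnalyticOnNhd ℂ (fun v : ℂ => (v + 1) ^ (y j + (j : ℤ) + 1)) (Metric.closedBall 0 r) := by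
    intro j v hv
    cases hm : y j + (j : ℤ) + 1 with
    | ofNat n =>
        simp only [Int.ofNat_eq_coe, zpow_natCast]
        exact ((analyticAt_id.add analyticAt_const).pow n)
    | negSucc n =>
        simp only [zpow_negSucc]
        exact (((analyticAt_id.add analyticAt_const).pow (n+1)).inv
          (pow_ne_zero _ (hne1 v hv)))
  have hG0 : ∀ j : Fin N, ((0:ℂ) + 1) ^ (y j + (j : ℤ) + 1) = 1 := by
    intro j; rw [zero_add, one_zpow]
  have hu : ∀ i : Fin N,
      AnalyticOnNhd ℂ (fun v : ℂ => (e i).eval v / F v) (Metric.closedBall 0 r) :=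
    fun i => (polyAnalytic (e i) _).div hFanOn hFne
  have hwan : ∀ j : Fin N,
      AnalyticOnNhd ℂ (fun v : ℂ => (v + 1) ^ (y j + (j : ℤ) + 1) * F v)
        (Metric.closedBall 0 r) := fun j => (hGan j).mul hFanOn
  -- Q entries
  have hQ : ∀ i k : Fin N, Q i k = cc r (k : ℕ) (fun v : ℂ => (e i).eval v / F v) := by
    intro i k
    show (2 * Real.pi * Complex.I)⁻¹ *
        circleIntegral (fun v : ℂ => (e i).eval v * v ^ (-(k : ℤ) - 1) / F v) 0 r = _
    unfold cc
    congr 1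
    refine circleIntegral.integral_congr hr.le (fun v hv => ?_)
    push_cast
    ring
  -- P entries, lower (k ≤ j)
  have hPlow : ∀ k j : Fin N, (k : ℕ) ≤ (j : ℕ) → P k j =
      cc r ((j : ℕ) - (k : ℕ)) (fun v : ℂ => (v + 1) ^ (y j + (j : ℤ) + 1) * F v) := by
    intro k j hkj
    show (2 * Real.pi * Complex.I)⁻¹ *
        circleIntegral (fun v : ℂ => v ^ ((k : ℤ) - (j : ℤ)) *
          (v + 1) ^ (y j + (j : ℤ) + 1) * F v / v) 0 r = _
    unfold cc
    congr 1
    refine circleIntegral.integral_congr hr.le (fun v hv => ?_)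
    have hv0 : v ≠ 0 := sphere_ne_zero hr hv
    have h1 : v ^ ((k : ℤ) - (j : ℤ)) / v = v ^ (-(((j : ℕ) - (k : ℕ) : ℕ) : ℤ) - 1) := by
      rw [div_eq_mul_inv, ← zpow_neg_one v, ← zpow_add₀ hv0]
      congr 1
      omega
    calc v ^ ((k : ℤ) - (j : ℤ)) * (v + 1) ^ (y j + (j : ℤ) + 1) * F v / v
        = (v + 1) ^ (y j + (j : ℤ) + 1) * F v * (v ^ ((k : ℤ) - (j : ℤ)) / v) := by ring
      _ = _ := by rw [h1]
  -- P entries, upper (j < k)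
  have hPhigh : ∀ k j : Fin N, (j : ℕ) < (k : ℕ) → P k j = 0 := by
    intro k j hkj
    show (2 * Real.pi * Complex.I)⁻¹ *
        circleIntegral (fun v : ℂ => v ^ ((k : ℤ) - (j : ℤ)) *
          (v + 1) ^ (y j + (j : ℤ) + 1) * F v / v) 0 r = 0
    have h : circleIntegral (fun v : ℂ => v ^ ((k : ℤ) - (j : ℤ)) *
          (v + 1) ^ (y j + (j : ℤ) + 1) * F v / v) 0 r
        = circleIntegral (fun v : ℂ => v ^ ((k : ℕ) - (j : ℕ) - 1) *
            ((v + 1) ^ (y j + (j : ℤ) + 1) * F v)) 0 r := by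
      refine circleIntegral.integral_congr hr.le (fun v hv => ?_)
      have hv0 : v ≠ 0 := sphere_ne_zero hr hv
      have h1 : v ^ ((k : ℤ) - (j : ℤ)) / v = v ^ (((k : ℕ) - (j : ℕ) - 1 : ℕ) : ℤ) := by
        rw [div_eq_mul_inv, ← zpow_neg_one v, ← zpow_add₀ hv0]
        congr 1
        omega
      calc v ^ ((k : ℤ) - (j : ℤ)) * (v + 1) ^ (y j + (j : ℤ) + 1) * F v / v
          = (v + 1) ^ (y j + (j : ℤ) + 1) * F v * (v ^ ((k : ℤ) - (j : ℤ)) / v) := by ring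
        _ = (v + 1) ^ (y j + (j : ℤ) + 1) * F v * v ^ (((k : ℕ) - (j : ℕ) - 1 : ℕ) : ℤ) := by
            rw [h1]
        _ = _ := by rw [zpow_natCast]; ring
    rw [h, cauchy0 hr.le ((analyticOnNhd_id.fun_pow _).mul (hwan j)), mul_zero]
  -- cc of polynomial-times-G integrals vs hbi statements
  have hbi_cc : ∀ (p : Polynomial ℂ) (i j : Fin N),
      cc r (j : ℕ) (fun v : ℂ => p.eval v * (v + 1) ^ (y j + (j : ℤ) + 1)) =
        (2 * Real.pi * Complex.I)⁻¹ *
          circleIntegral (fun v : ℂ => p.eval v * v ^ (-(j : ℤ) - 1) *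
            (v + 1) ^ (y j + (j : ℤ) + 1)) 0 r := by
    intro p i j
    unfold cc
    congr 1
    refine circleIntegral.integral_congr hr.le (fun v hv => ?_)
    push_cast
    ring
  -- main QP computation
  have key : ∀ i j : Fin N, (Q * P) i j = if i = j then 1 else 0 := by
    intro i j
    rw [Matrix.mul_apply]
    set u : ℂ → ℂ := fun v : ℂ => (e i).eval v / F v with hu_def
    set w : ℂ → ℂ := fun v : ℂ => (v + 1) ^ (y j + (j : ℤ) + 1) * F v with hw_def
    have hwA : AnalyticOnNhd ℂ w (Metric.closedBall 0 r) := hwan j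
    have huA : AnalyticOnNhd ℂ u (Metric.closedBall 0 r) := hu i
    set cf : ℕ → ℂ := fun k => cc r k u with hcf_def
    have hterm : ∀ k : Fin N, Q i k * P k j =
        cf (k : ℕ) * (if (k : ℕ) ≤ (j : ℕ) then cc r ((j : ℕ) - (k : ℕ)) w else 0) := by
      intro k
      by_cases hkj : (k : ℕ) ≤ (j : ℕ)
      · rw [hQ i k, hPlow k j hkj, if_pos hkj]
      · rw [hQ i k, hPhigh k j (by omega), if_neg hkj]
    have hsum1 : ∑ k : Fin N, Q i k * P k j =
        ∑ k ∈ range N, cf k * (if k ≤ (j : ℕ) then cc r ((j : ℕ) - k) w else 0) := by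
      rw [Finset.sum_congr rfl (fun k _ => hterm k)]
      exact Fin.sum_univ_eq_sum_range
        (fun k => cf k * (if k ≤ (j : ℕ) then cc r ((j : ℕ) - k) w else 0)) N
    set T : ℂ → ℂ := fun v : ℂ => ∑ k ∈ range N, cf k * v ^ k with hT_def
    have hTA : AnalyticOnNhd ℂ T (Metric.closedBall 0 r) := by
      refine Finset.analyticOnNhd_fun_sum _ (fun k _ => ?_)
      exact analyticOnNhd_const.mul (analyticOnNhd_id.pow k)
    have hsum2 : ∑ k ∈ range N, cf k * (if k ≤ (j : ℕ) then cc r ((j : ℕ) - k) w else 0)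
        = cc r (j : ℕ) (fun v : ℂ => T v * w v) :=
      (ccpolymul hr (j : ℕ) N cf hwA).symm
    -- show cc of T*w equals cc of u*w
    have hdiffzero : ∀ k, k ≤ (j : ℕ) → cc r k (fun v : ℂ => u v - T v) = 0 := by
      intro k hk
      have hkN : k < N := lt_of_le_of_lt hk j.isLt
      rw [ccsub (ccint hr (huA.continuousOn.mono hsub) _)
        (ccint hr (hTA.continuousOn.mono hsub) _)]
      rw [ccpolycoeff hr k N hkN cf]
      simp [hcf_def]
    have hTu : cc r (j : ℕ) (fun v : ℂ => u v * w v)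
        = cc r (j : ℕ) (fun v : ℂ => T v * w v) := by
      have h0 : cc r (j : ℕ) (fun v : ℂ => (u v - T v) * w v) = 0 :=
        cczero hr (j : ℕ) (huA.sub hTA) hwA hdiffzero
      have he : (fun v : ℂ => (u v - T v) * w v)
          = fun v : ℂ => u v * w v - T v * w v := by funext v; ring
      rw [he, ccsub (ccint hr ((huA.mul hwA).continuousOn.mono hsub) _)
        (ccint hr ((hTA.mul hwA).continuousOn.mono hsub) _)] at h0
      exact sub_eq_zero.mp h0
    have huw : cc r (j : ℕ) (fun v : ℂ => u v * w v)
        = cc r (j : ℕ) (fun v : ℂ => (e i).eval v * (v + 1) ^ (y j + (j : ℤ) + 1)) := by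
      unfold cc
      congr 1
      refine circleIntegral.integral_congr hr.le (fun v hv => ?_)
      have hF : F v ≠ 0 := hFne v (hsub hv)
      simp only [hu_def, hw_def]
      field_simp
    rw [hsum1, hsum2, ← hTu, huw, hbi_cc (e i) i j]
    exact hbi i j
  have QP : Q * P = 1 := by
    ext i j
    rw [key i j, Matrix.one_apply]
  refine ⟨mul_eq_one_comm.mpr QP, QP, ?_⟩
  intro e' hdeg' hstruct' hbi'
  funext i
  have claim : ∀ m : ℕ, (e' i - e i).coeff m = 0 := by
    intro m
    induction m using Nat.strong_induction_on with
    | _ m ih =>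
      by_cases hd0 : e' i - e i = 0
      · rw [hd0, Polynomial.coeff_zero]
      by_cases hmN : m < N
      · by_cases hmi : m < (i : ℕ)
        · rw [Polynomial.coeff_sub, hstruct' i m hmi, hstruct i m hmi, sub_zero]
        · -- main case : use biorthogonality at column j = m
          set j : Fin N := ⟨m, hmN⟩ with hj_def
          have hjm : (j : ℕ) = m := rfl
          set d : Polynomial ℂ := e' i - e i with hd_def
          have hGA : AnalyticOnNhd ℂ (fun v : ℂ => (v + 1) ^ (y j + (j : ℤ) + 1))
              (Metric.closedBall 0 r) := hGan j
          have hsub0 : cc r m (fun v : ℂ => d.eval v * (v + 1) ^ (y j + (j : ℤ) + 1)) = 0 := by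
            have h1 := (hbi_cc (e' i) i j).trans (hbi' i j)
            have h2 := (hbi_cc (e i) i j).trans (hbi i j)
            have he : (fun v : ℂ => d.eval v * (v + 1) ^ (y j + (j : ℤ) + 1))
                = fun v : ℂ => (e' i).eval v * (v + 1) ^ (y j + (j : ℤ) + 1)
                    - (e i).eval v * (v + 1) ^ (y j + (j : ℤ) + 1) := by
              funext v
              rw [hd_def, Polynomial.eval_sub]
              ring
            rw [hjm] at h1 h2
            rw [he, ccsub (ccint hr (((polyAnalytic (e' i) _).mul hGA).continuousOn.mono hsub) _)
              (ccint hr (((polyAnalytic (e i) _).mul hGA).continuousOn.mono hsub) _),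
              h1, h2, sub_self]
          have hnd : d.natDegree < N := by
            rw [Polynomial.natDegree_lt_iff_degree_lt hd0]
            exact lt_of_le_of_lt (Polynomial.degree_sub_le _ _) (max_lt (hdeg' i) (hdeg i))
          have hev : (fun v : ℂ => d.eval v * (v + 1) ^ (y j + (j : ℤ) + 1))
              = fun v : ℂ => (∑ k ∈ range N, d.coeff k * v ^ k) *
                  (v + 1) ^ (y j + (j : ℤ) + 1) := by
            funext v
            rw [Polynomial.eval_eq_sum_range' hnd v]
          rw [hev, ccpolymul hr m N _ hGA] at hsub0
          rw [Finset.sum_eq_single m (fun k _ hkm => ?_) (fun hm => absurd (Finset.mem_range.mpr hmN) hm)] at hsub0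
          · rw [if_pos le_rfl, Nat.sub_self, ccval hr hGA, hG0 j, mul_one] at hsub0
            exact hsub0
          · by_cases hkm' : k < m
            · rw [ih k hkm', zero_mul]
            · rw [if_neg (by omega), mul_zero]
      · refine Polynomial.coeff_eq_zero_of_degree_lt ?_
        have hdlt : (e' i - e i).degree < (N : ℕ) :=
          lt_of_le_of_lt (Polynomial.degree_sub_le _ _) (max_lt (hdeg' i) (hdeg i))
        exact lt_of_lt_of_le hdlt (by exact_mod_cast Nat.le_of_not_lt hmN)
  have : e' i - e i = 0 := Polynomial.ext fun m => by rw [claim m, Polynomial.coeff_zero]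
  exact sub_eq_zero.mp this
end

section
/- Let N < L, ρ = N/L, and |z| < r_0 = ρ^ρ(1−ρ)^{1−ρ}. For the initial configuration Y = (y_1,…,y_N) ∈ X_N(L) and its cyclic shift Ŷ defined by ŷ_i = y_{i+k} + c for 1 ≤ i ≤ N−k and ŷ_i = y_{i+k−N} − L + c for N−k+1 ≤ i ≤ N (where 1 ≤ k ≤ N, c ∈ ℤ), and for any w_1,…,w_N ∈ S_z (Bethe roots, so w^N(w+1)^{L−N} = z^L for each), one has det[w_i^{−j}(w_i+1)^{ŷ_j+j}]_{i,j=1}^N = det[w_i^{−j}(w_i+1)^{y_j+j}]_{i,j=1}^N · (−1)^{k(N−k)} z^{−kL} ∏_{j=1}^N w_j^k (w_j+1)^{−k+c}. -/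
set_option maxHeartbeats 1000000


open Complex

private lemma statement14_aux {a b : ℂ} (ha : a ≠ 0) (hb : b ≠ 0) (u : ℂ)
    {p q p1 q1 p2 q2 p3 q3 : ℤ}
    (hu : u = a ^ p2 * b ^ q2) (hp : p = p1 + p2 + p3) (hq : q = q1 + q2 + q3) :
    a ^ p * b ^ q = a ^ p1 * b ^ q1 * (u * (a ^ p3 * b ^ q3)) := by
  subst hu hp hq
  rw [zpow_add₀ ha, zpow_add₀ ha, zpow_add₀ hb, zpow_add₀ hb]; ring

open Fin.NatCast in
private lemma statement14_rot {n : ℕ} (k : ℕ) :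
    ∀ j : Fin (n+1), ((finRotate (n+1))^k) j = j + (k : Fin (n+1)) := by
  induction k with
  | zero => intro j; simp
  | succ m ih =>
    intro j
    rw [pow_succ, Equiv.Perm.mul_apply, finRotate_succ_apply, ih (j+1)]
    push_cast
    abel

/-- shift identity for the determinant.  Indices are 0-based: `y j` is the
paper's `y_{j+1}`, so the matrix entry `w_i^{−j}(w_i+1)^{y_j+j}` (1-based) becomes
`w_i^{−j−1}(w_i+1)^{y_j+j+1}`.  For Bethe roots `w_i` (i.e. `w_i^N(w_i+1)^{L−N} = z^L`),
`Y ∈ X_N(L)` and its `(k,c)`-shift `Ŷ`,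
`det[w_i^{−j}(w_i+1)^{ŷ_j+j}] = det[w_i^{−j}(w_i+1)^{y_j+j}] · (−1)^{k(N−k)} z^{−kL}
  ∏_j w_j^k (w_j+1)^{−k+c}`. -/
theorem statement14 (N L : ℕ) (hN : 0 < N) (hNL : N < L) (z : ℂ) (hz : z ≠ 0)
    (w : Fin N → ℂ) (hw0 : ∀ i, w i ≠ 0) (hw1 : ∀ i, w i ≠ -1)
    (hBethe : ∀ i, (w i) ^ N * (w i + 1) ^ (L - N) = z ^ L)
    (y : Fin N → ℤ) (hYdec : ∀ i j : Fin N, i < j → y j < y i)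
    (hYper : y ⟨0, hN⟩ < y ⟨N - 1, by omega⟩ + L)
    (k : ℕ) (hk1 : 1 ≤ k) (hkN : k ≤ N) (c : ℤ) :
    let yhat : Fin N → ℤ := fun i =>
      if h : (i : ℕ) + k < N then y ⟨(i : ℕ) + k, h⟩ + c
      else y ⟨(i : ℕ) + k - N, by have := i.isLt; omega⟩ - L + c
    Matrix.det (Matrix.of fun i j : Fin N =>
        (w i) ^ (-(j : ℤ) - 1) * (w i + 1) ^ (yhat j + (j : ℤ) + 1)) =
      Matrix.det (Matrix.of fun i j : Fin N =>
        (w i) ^ (-(j : ℤ) - 1) * (w i + 1) ^ (y j + (j : ℤ) + 1)) *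
      (-1) ^ (k * (N - k)) * z ^ (-((k * L : ℕ) : ℤ)) *
      ∏ j : Fin N, (w j) ^ k * (w j + 1) ^ ((c : ℤ) - k) := by
  obtain ⟨n, rfl⟩ : ∃ n, N = n + 1 := ⟨N - 1, by omega⟩
  intro yhat
  have hb : ∀ i, w i + 1 ≠ 0 := fun i h => hw1 i (eq_neg_of_add_eq_zero_left h)
  -- Bethe relation, zpow form
  have hBz : ∀ i, z ^ (-(L:ℤ)) =
      (w i) ^ (-((n+1:ℕ):ℤ)) * (w i + 1) ^ (((n+1:ℕ):ℤ) - (L:ℤ)) := by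
    intro i
    have h2 : (((n+1:ℕ):ℤ) - (L:ℤ)) = -(((L-(n+1):ℕ)):ℤ) := by omega
    rw [h2, zpow_neg, zpow_neg, zpow_neg, zpow_natCast, zpow_natCast, zpow_natCast,
      ← mul_inv, hBethe i]
  -- the cyclic permutation
  set σ : Equiv.Perm (Fin (n+1)) := (finRotate (n+1))^k with hσdef
  have hσv1 : ∀ j : Fin (n+1), ((j:ℕ) + k < n+1) → ((σ j : ℕ)) = (j:ℕ) + k := by
    intro j hj
    rw [hσdef, statement14_rot k j, Fin.add_def]
    simp only [Fin.val_natCast]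
    rw [Nat.add_mod_mod, Nat.mod_eq_of_lt hj]
  have hσv2 : ∀ j : Fin (n+1), ¬((j:ℕ) + k < n+1) → ((σ j : ℕ)) = (j:ℕ) + k - (n+1) := by
    intro j hj
    rw [hσdef, statement14_rot k j, Fin.add_def]
    simp only [Fin.val_natCast]
    rw [Nat.add_mod_mod, Nat.mod_eq_sub_mod (by omega),
      Nat.mod_eq_of_lt (by have := j.isLt; omega)]
  -- the matrix identity
  have key : (Matrix.of fun i j : Fin (n+1) =>
        (w i) ^ (-(j : ℤ) - 1) * (w i + 1) ^ (yhat j + (j : ℤ) + 1)) =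
      Matrix.of (fun i j : Fin (n+1) =>
        ((w i)^k * (w i + 1)^((c:ℤ) - k)) *
          (Matrix.of (fun i j : Fin (n+1) =>
            (if (j:ℕ) + k < n+1 then (1:ℂ) else z ^ (-(L:ℤ))) *
              ((Matrix.of fun i j : Fin (n+1) =>
                (w i) ^ (-(j : ℤ) - 1) * (w i + 1) ^ (y j + (j : ℤ) + 1)).submatrix id σ) i j)) i j) := by
    ext i j
    simp only [Matrix.of_apply, Matrix.submatrix_apply, id_eq]
    have hyj : yhat j = if h : (j:ℕ) + k < n+1 then y ⟨(j:ℕ)+k, h⟩ + c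
        else y ⟨(j:ℕ)+k-(n+1), by have := j.isLt; omega⟩ - L + c := rfl
    rw [← zpow_natCast (w i) k]
    by_cases hj : (j:ℕ) + k < n+1
    · have hσj : σ j = ⟨(j:ℕ)+k, hj⟩ := Fin.ext (hσv1 j hj)
      rw [hyj, dif_pos hj, if_pos hj, hσj]
      refine statement14_aux (hw0 i) (hb i) 1
        (show (1:ℂ) = w i ^ (0:ℤ) * (w i + 1) ^ (0:ℤ) by simp) ?_ ?_
      · simp only [Fin.val_mk]; push_cast; ring
      · simp only [Fin.val_mk]; push_cast; ring
    · have hσj : σ j = ⟨(j:ℕ)+k-(n+1), by have := j.isLt; omega⟩ :=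
        Fin.ext (hσv2 j hj)
      rw [hyj, dif_neg hj, if_neg hj, hσj]
      refine statement14_aux (hw0 i) (hb i) _ (hBz i) ?_ ?_
      · simp only [Fin.val_mk]; omega
      · simp only [Fin.val_mk]; omega
  rw [key, Matrix.det_mul_column, Matrix.det_mul_row, Matrix.det_permute']
  -- the product of the column factors
  have hprod : (∏ j : Fin (n+1), (if (j:ℕ) + k < n+1 then (1:ℂ) else z ^ (-(L:ℤ))))
      = z ^ (-((k * L : ℕ) : ℤ)) := by
    rw [Finset.prod_ite, Finset.prod_const_one, one_mul, Finset.prod_const]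
    have hcard : (Finset.univ.filter fun j : Fin (n+1) => ¬((j:ℕ) + k < n+1)).card = k := by
      rw [Finset.card_filter,
        Fin.sum_univ_eq_sum_range (fun m => if ¬(m + k < n+1) then 1 else 0) (n+1),
        ← Finset.card_filter,
        show (Finset.range (n+1)).filter (fun m => ¬(m + k < n+1)) = Finset.Ico (n+1-k) (n+1) by
          ext m; simp only [Finset.mem_filter, Finset.mem_range, Finset.mem_Ico]; omega,
        Nat.card_Ico]
      omega
    rw [hcard, ← zpow_natCast (z ^ (-(L:ℤ))) k, ← zpow_mul]
    congr 1; push_cast; ring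
  -- the sign
  have hsign : ((Equiv.Perm.sign σ : ℤ) : ℂ) = (-1) ^ (k * ((n+1) - k)) := by
    have h1 : Equiv.Perm.sign σ = (-1) ^ (n*k) := by
      rw [hσdef, map_pow, sign_finRotate, ← pow_mul, Nat.add_sub_cancel]
    rw [h1]
    push_cast
    obtain ⟨k', rfl⟩ : ∃ k', k = k' + 1 := ⟨k - 1, by omega⟩
    obtain ⟨m, rfl⟩ : ∃ m, n = k' + m := ⟨n - k', by omega⟩
    have h3 : (k'+m) * (k'+1) = (k'+1) * ((k'+m+1) - (k'+1)) + k' * (k'+1) := by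
      rw [show (k'+m+1) - (k'+1) = m by omega]; ring
    rw [h3, pow_add, (Nat.even_mul_succ_self k').neg_one_pow, mul_one]
  rw [hprod, hsign]
  ring
end

section
/- Let R_z = {v_1,…,v_N} be distinct nonzero complex numbers with det[v_j^{−i}(v_j+1)^{y_i+i}]_{i,j=1}^N ≠ 0, let q_R(w) = ∏_{j}(w − v_j), and let u ∉ R_z, u ≠ 0. Then the unique solution (c_1,…,c_N) of the linear system Σ_{j=1}^N v_j^{−i}(v_j+1)^{y_i+i} c_j = −u^{−i}(u+1)^{y_i+i} (1 ≤ i ≤ N) is given by c_j = (v_j^N q_R(u))/(u^N q_R'(v_j)) · G_j/(v_j − u) / G, where G = det[v_b^{−a}(v_b+1)^{y_a+a}] and G_j is the same determinant with column j's node v_j replaced by u; equivalently, the Cramer's-rule ratio det[v_b^{−a}(v_b+1)^{y_a+a} 1_{b≠j} − u^{−a}(u+1)^{y_a+a} 1_{b=j}]/det[v_b^{−a}(v_b+1)^{y_a+a}] factors as [G_{λ}(R_z ∪ {u} ∖ {v_j}) / G_λ(R_z)] · (v_j^N q_R(u))/(u^N q_R'(v_j)(v_j − u)), using the auxiliary identity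 det[v_b^{−a}1_{b≠j} − u^{−a}1_{b=j}]/det[v_b^{−a}] = (v_j^N q_R(u))/(u^N q_R'(v_j)(v_j − u)). -/
open Complex
open scoped Classical

open Finset

private lemma det_neg_pow {N : ℕ} (x : Fin N → ℂ) (hx : ∀ b, x b ≠ 0) :
    Matrix.det (Matrix.of fun a b : Fin N => x b ^ (-(a : ℤ) - 1)) =
    ((Equiv.Perm.sign (Fin.revPerm : Equiv.Perm (Fin N)) : ℤ) : ℂ) *
      (∏ b, x b) ^ (-(N : ℤ)) * ∏ i, ∏ k ∈ Finset.Ioi i, (x k - x i) := by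
  have h1 : ∀ a b : Fin N, x b ^ (-(a : ℤ) - 1) =
      x b ^ (-(N : ℤ)) * x b ^ ((Fin.rev a : ℕ)) := by
    intro a b
    rw [← zpow_natCast (x b) ((Fin.rev a : ℕ)), ← zpow_add₀ (hx b)]
    congr 1
    rw [Fin.val_rev]
    have := a.is_lt
    omega
  have h2 : (Matrix.of fun a b : Fin N => x b ^ (-(a : ℤ) - 1)) =
      Matrix.of fun a b : Fin N => (fun c => x c ^ (-(N : ℤ))) b *
        ((Matrix.vandermonde x).transpose.submatrix (Fin.revPerm : Equiv.Perm (Fin N)) id) a b := by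
    ext a b
    simp only [Matrix.of_apply, Matrix.submatrix_apply, Matrix.transpose_apply,
      Matrix.vandermonde_apply, Fin.revPerm_apply, id_eq]
    exact h1 a b
  rw [h2, Matrix.det_mul_row (fun c => x c ^ (-(N : ℤ)))
      ((Matrix.vandermonde x).transpose.submatrix (Fin.revPerm : Equiv.Perm (Fin N)) id)]
  have h3 := Matrix.det_permute (Fin.revPerm : Equiv.Perm (Fin N)) (Matrix.vandermonde x).transpose
  rw [h3, Matrix.det_transpose, Matrix.det_vandermonde, Finset.prod_zpow]
  push_cast
  ring

private lemma deriv_qR {N : ℕ} (v : Fin N → ℂ) (hinj : Function.Injective v) (j : Fin N) :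
    deriv (fun x : ℂ => ∏ b : Fin N, (x - v b)) (v j) =
      ∏ b ∈ Finset.univ.erase j, (v j - v b) := by
  have hd : HasDerivAt (fun x : ℂ => ∏ b : Fin N, (x - v b))
      (∑ i : Fin N, (∏ b ∈ Finset.univ.erase i, (v j - v b)) • (1 : ℂ)) (v j) := by
    exact HasDerivAt.fun_finsetProd (fun i _ => (hasDerivAt_id (v j)).sub_const (v i))
  rw [hd.deriv, Finset.sum_eq_single j]
  · simp
  · intro i _ hi
    rw [smul_eq_mul, mul_one]
    refine Finset.prod_eq_zero (Finset.mem_erase.mpr ⟨Ne.symm hi, Finset.mem_univ j⟩) ?_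
    · simp
  · simp
open Finset

private lemma prod_split_erase {ι β : Type*} [CommMonoid β] [DecidableEq ι]
    (s : Finset ι) (j : ι) (g : ι → β) :
    ∏ k ∈ s, g k = (if j ∈ s then g j else 1) * ∏ k ∈ s.erase j, g k := by
  by_cases h : j ∈ s
  · simp [h, (Finset.mul_prod_erase s g h).symm]
  · simp [h, Finset.erase_eq_of_notMem h]

private lemma erase_univ_split {N : ℕ} (j : Fin N) (g : Fin N → ℂ) :
    ∏ b ∈ Finset.univ.erase j, g b = (∏ b ∈ Finset.Iio j, g b) * ∏ b ∈ Finset.Ioi j, g b := by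
  rw [← Finset.prod_union]
  · congr 1
    ext b
    simp only [Finset.mem_erase, Finset.mem_union, Finset.mem_Iio, Finset.mem_Ioi,
      Finset.mem_univ, and_true]
    omega
  · intro t ht1 ht2 b hb
    have h1 := ht1 hb; have h2 := ht2 hb
    simp only [Finset.mem_Iio, Finset.mem_Ioi] at h1 h2
    exact absurd (h1.trans h2) (lt_irrefl _)

private lemma vdm_update {N : ℕ} (v : Fin N → ℂ) (u : ℂ) (j : Fin N) :
    (∏ i, ∏ k ∈ Finset.Ioi i, (Function.update v j u k - Function.update v j u i)) *
      ∏ b ∈ Finset.univ.erase j, (v j - v b)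
    = (∏ i, ∏ k ∈ Finset.Ioi i, (v k - v i)) * ∏ b ∈ Finset.univ.erase j, (u - v b) := by
  set w := Function.update v j u with hw
  have hsplit : ∀ x : Fin N → ℂ,
      (∏ i, ∏ k ∈ Finset.Ioi i, (x k - x i)) =
      (∏ k ∈ Finset.Ioi j, (x k - x j)) *
      ((∏ i ∈ Finset.univ.erase j, (if j ∈ Finset.Ioi i then (x j - x i) else 1)) *
       (∏ i ∈ Finset.univ.erase j, ∏ k ∈ (Finset.Ioi i).erase j, (x k - x i))) := by
    intro x
    rw [← Finset.prod_mul_distrib, ← Finset.mul_prod_erase Finset.univ _ (Finset.mem_univ j)]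
    congr 1
    exact Finset.prod_congr rfl fun i _ => prod_split_erase _ _ _
  rw [hsplit w, hsplit v]
  -- rewrite w-terms
  have h1 : (∏ k ∈ Finset.Ioi j, (w k - w j)) = ∏ k ∈ Finset.Ioi j, (v k - u) := by
    refine Finset.prod_congr rfl fun k hk => ?_
    have : k ≠ j := ne_of_gt (Finset.mem_Ioi.mp hk)
    rw [hw, Function.update_of_ne this, Function.update_self]
  have h2 : (∏ i ∈ Finset.univ.erase j, (if j ∈ Finset.Ioi i then (w j - w i) else 1)) =
      ∏ i ∈ Finset.univ.erase j, (if j ∈ Finset.Ioi i then (u - v i) else 1) := by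
    refine Finset.prod_congr rfl fun i hi => ?_
    have hi' : i ≠ j := (Finset.mem_erase.mp hi).1
    rw [hw, Function.update_of_ne hi', Function.update_self]
  have h3 : (∏ i ∈ Finset.univ.erase j, ∏ k ∈ (Finset.Ioi i).erase j, (w k - w i)) =
      ∏ i ∈ Finset.univ.erase j, ∏ k ∈ (Finset.Ioi i).erase j, (v k - v i) := by
    refine Finset.prod_congr rfl fun i hi => Finset.prod_congr rfl fun k hk => ?_
    have hi' : i ≠ j := (Finset.mem_erase.mp hi).1
    have hk' : k ≠ j := (Finset.mem_erase.mp hk).1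
    rw [hw, Function.update_of_ne hi', Function.update_of_ne hk']
  rw [h1, h2, h3]
  -- reduce if-products to Iio products
  have hif : ∀ c : ℂ, ∀ f : Fin N → ℂ,
      (∏ i ∈ Finset.univ.erase j, (if j ∈ Finset.Ioi i then (c - f i) else 1)) =
      ∏ i ∈ Finset.Iio j, (c - f i) := by
    intro c f
    rw [← Finset.prod_filter]
    congr 1
    ext i
    simp only [Finset.mem_filter, Finset.mem_erase, Finset.mem_univ, Finset.mem_Ioi,
      Finset.mem_Iio, and_true, true_and]
    omega
  rw [hif u v, hif (v j) v, erase_univ_split j (fun b => v j - v b),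
    erase_univ_split j (fun b => u - v b)]
  have key : (∏ k ∈ Finset.Ioi j, (v k - u)) * (∏ b ∈ Finset.Ioi j, (v j - v b)) =
      (∏ k ∈ Finset.Ioi j, (v k - v j)) * (∏ b ∈ Finset.Ioi j, (u - v b)) := by
    rw [← Finset.prod_mul_distrib, ← Finset.prod_mul_distrib]
    exact Finset.prod_congr rfl fun k _ => by ring
  -- pure commutative rearrangement using key
  set a1 := ∏ k ∈ Finset.Ioi j, (v k - u)
  set a2 := ∏ i ∈ Finset.Iio j, (u - v i)
  set a3 := ∏ i ∈ Finset.univ.erase j, ∏ k ∈ (Finset.Ioi i).erase j, (v k - v i)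
  set b1 := ∏ b ∈ Finset.Iio j, (v j - v b)
  set b2 := ∏ b ∈ Finset.Ioi j, (v j - v b)
  set c1 := ∏ k ∈ Finset.Ioi j, (v k - v j)
  set c2 := ∏ b ∈ Finset.Ioi j, (u - v b)
  -- goal: a1 * (a2 * a3) * (b1 * b2) = c1 * (b1 * a3) * (a2 * c2)
  linear_combination (a2 * a3 * b1) * key

set_option maxHeartbeats 1600000 in
/-- Cramer's-rule solution of the linear system behind the characteristic
function.  Indices are 0-based: row `a` corresponds to the paper's `i = a+1`, so entries
read `v_b^{−a−1}(v_b+1)^{y_a+a+1}`.  With `A` the coefficient matrix, `q_R(w) = ∏(w−v_b)`,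
and `G_λ(W) = det[W_b^{−a}(W_b+1)^{y_a+a}]/det[W_b^{−a}]`: the Vandermonde auxiliary
identity holds, the Cramer ratio factors through `G_λ`, and the linear system
`Σ_b A(a,b) c_b = −u^{−a}(u+1)^{y_a+a}` has a unique solution, given by
`c_j = (G_λ(R_z∪{u}∖{v_j})/G_λ(R_z)) · v_j^N q_R(u)/(u^N q_R'(v_j)(v_j−u))`. -/
theorem statement16 (N : ℕ) (hN : 0 < N) (y : Fin N → ℤ)
    (v : Fin N → ℂ) (hinj : Function.Injective v)
    (hv0 : ∀ i, v i ≠ 0) (hv1 : ∀ i, v i ≠ -1)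
    (u : ℂ) (hu0 : u ≠ 0) (hu1 : u ≠ -1) (huv : ∀ i, u ≠ v i) :
    let A : Matrix (Fin N) (Fin N) ℂ := Matrix.of fun a b =>
      (v b) ^ (-(a : ℤ) - 1) * (v b + 1) ^ (y a + (a : ℤ) + 1)
    let V : Matrix (Fin N) (Fin N) ℂ := Matrix.of fun a b => (v b) ^ (-(a : ℤ) - 1)
    let qR : ℂ → ℂ := fun x => ∏ b : Fin N, (x - v b)
    let Gl : (Fin N → ℂ) → ℂ := fun Wt =>
      Matrix.det (Matrix.of fun a b =>
          (Wt b) ^ (-(a : ℤ) - 1) * (Wt b + 1) ^ (y a + (a : ℤ) + 1)) /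
        Matrix.det (Matrix.of fun a b => (Wt b) ^ (-(a : ℤ) - 1))
    Matrix.det A ≠ 0 →
    (∀ j : Fin N,
      Matrix.det (Matrix.of fun a b =>
          if b = j then -(u ^ (-(a : ℤ) - 1)) else (v b) ^ (-(a : ℤ) - 1)) /
        Matrix.det V =
      (v j) ^ (N : ℕ) * qR u / (u ^ (N : ℕ) * deriv qR (v j)) * (1 / (v j - u))) ∧
    (∀ j : Fin N,
      Matrix.det (Matrix.of fun a b =>
          if b = j then -(u ^ (-(a : ℤ) - 1) * (u + 1) ^ (y a + (a : ℤ) + 1))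
          else A a b) / Matrix.det A =
      Gl (Function.update v j u) / Gl v *
        ((v j) ^ (N : ℕ) * qR u / (u ^ (N : ℕ) * deriv qR (v j) * (v j - u)))) ∧
    (∃! c : Fin N → ℂ, ∀ a : Fin N,
      (∑ b : Fin N, A a b * c b) =
        -(u ^ (-(a : ℤ) - 1) * (u + 1) ^ (y a + (a : ℤ) + 1))) ∧
    (∀ c : Fin N → ℂ,
      (∀ a : Fin N, (∑ b : Fin N, A a b * c b) =
        -(u ^ (-(a : ℤ) - 1) * (u + 1) ^ (y a + (a : ℤ) + 1))) →
      ∀ j : Fin N, c j =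
        Gl (Function.update v j u) / Gl v *
          ((v j) ^ (N : ℕ) * qR u / (u ^ (N : ℕ) * deriv qR (v j) * (v j - u)))) := by
  intro A V qR Gl hA
  -- basic nonvanishing facts
  have hε : ((Equiv.Perm.sign (Fin.revPerm : Equiv.Perm (Fin N)) : ℤ) : ℂ) ≠ 0 := by
    exact_mod_cast Units.ne_zero _
  set ε : ℂ := ((Equiv.Perm.sign (Fin.revPerm : Equiv.Perm (Fin N)) : ℤ) : ℂ) with hεdef
  have hPv : (∏ i, ∏ k ∈ Finset.Ioi i, (v k - v i)) ≠ 0 := by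
    refine Finset.prod_ne_zero_iff.mpr fun i _ => Finset.prod_ne_zero_iff.mpr fun k hk => ?_
    exact sub_ne_zero.mpr (hinj.ne (ne_of_gt (Finset.mem_Ioi.mp hk)))
  have hprodv : (∏ b, v b) ≠ 0 := Finset.prod_ne_zero_iff.mpr fun b _ => hv0 b
  have hdetV : Matrix.det V = ε * (∏ b, v b) ^ (-(N : ℤ)) * ∏ i, ∏ k ∈ Finset.Ioi i, (v k - v i) :=
    det_neg_pow v hv0
  have hdetV0 : Matrix.det V ≠ 0 := by
    rw [hdetV]
    exact mul_ne_zero (mul_ne_zero hε (zpow_ne_zero _ hprodv)) hPv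
  -- per-j data
  have hE : ∀ j, (∏ b ∈ Finset.univ.erase j, (v j - v b)) ≠ 0 := fun j =>
    Finset.prod_ne_zero_iff.mpr fun b hb =>
      sub_ne_zero.mpr fun h => (Finset.mem_erase.mp hb).1 (hinj h.symm)
  have hF : ∀ j, (∏ b ∈ Finset.univ.erase j, (u - v b)) ≠ 0 := fun j =>
    Finset.prod_ne_zero_iff.mpr fun b _ => sub_ne_zero.mpr (huv b)
  have hQ : ∀ j, (∏ b ∈ Finset.univ.erase j, v b) ≠ 0 := fun j =>
    Finset.prod_ne_zero_iff.mpr fun b _ => hv0 b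
  have hderiv : ∀ j, deriv qR (v j) = ∏ b ∈ Finset.univ.erase j, (v j - v b) := fun j =>
    deriv_qR v hinj j
  have hqRu : ∀ j, qR u = (u - v j) * ∏ b ∈ Finset.univ.erase j, (u - v b) := fun j =>
    (Finset.mul_prod_erase Finset.univ (fun b => u - v b) (Finset.mem_univ j)).symm
  have hw0 : ∀ j, ∀ b, Function.update v j u b ≠ 0 := by
    intro j b
    rcases eq_or_ne b j with h | h
    · rw [h, Function.update_self]; exact hu0
    · rw [Function.update_of_ne h]; exact hv0 b
  have hdetVw : ∀ j, Matrix.det (Matrix.of fun a b : Fin N =>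
        (Function.update v j u b) ^ (-(a : ℤ) - 1)) =
      ε * (u * ∏ b ∈ Finset.univ.erase j, v b) ^ (-(N : ℤ)) *
        ∏ i, ∏ k ∈ Finset.Ioi i, (Function.update v j u k - Function.update v j u i) := by
    intro j
    rw [det_neg_pow _ (hw0 j), Finset.prod_update_of_mem (Finset.mem_univ j), Finset.sdiff_singleton_eq_erase]
  have hprodveq : ∀ j, (∏ b, v b) = v j * ∏ b ∈ Finset.univ.erase j, v b := fun j =>
    (Finset.mul_prod_erase Finset.univ v (Finset.mem_univ j)).symm
  have hkey : ∀ j,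
      (∏ i, ∏ k ∈ Finset.Ioi i, (Function.update v j u k - Function.update v j u i)) *
        ∏ b ∈ Finset.univ.erase j, (v j - v b)
      = (∏ i, ∏ k ∈ Finset.Ioi i, (v k - v i)) * ∏ b ∈ Finset.univ.erase j, (u - v b) :=
    fun j => vdm_update v u j
  -- the sign-flipped column determinant computation, generic
  have hflip : ∀ (M : Matrix (Fin N) (Fin N) ℂ) (j : Fin N) (g : Fin N → ℂ),
      Matrix.det (Matrix.of fun a b => if b = j then -(g a) else M a b) =
      -(Matrix.det (Matrix.of fun a b => if b = j then g a else M a b)) := by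
    intro M j g
    have h2 : (Matrix.of fun a b => if b = j then -(g a) else M a b) =
        Matrix.of fun a b => (fun c => if c = j then (-1 : ℂ) else 1) b *
          (Matrix.of fun a b => if b = j then g a else M a b) a b := by
      ext a b
      by_cases h : b = j <;> simp [h]
    rw [h2, Matrix.det_mul_row]
    simp [Finset.prod_ite_eq']
  have hflip : ∀ (m : Fin N → Fin N → ℂ) (j : Fin N) (g : Fin N → ℂ),
      Matrix.det (Matrix.of fun a b => if b = j then -(g a) else m a b) =
      -(Matrix.det (Matrix.of fun a b => if b = j then g a else m a b)) := by
    intro m j g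
    have h2 : (Matrix.of fun a b => if b = j then -(g a) else m a b) =
        Matrix.of fun a b => (fun c => if c = j then (-1 : ℂ) else 1) b *
          (Matrix.of fun a b => if b = j then g a else m a b) a b := by
      ext a b
      by_cases h : b = j <;> simp [h]
    rw [h2, Matrix.det_mul_row]
    simp [Finset.prod_ite_eq']
  have part1 : ∀ j : Fin N,
      Matrix.det (Matrix.of fun a b =>
          if b = j then -(u ^ (-(a : ℤ) - 1)) else (v b) ^ (-(a : ℤ) - 1)) /
        Matrix.det V =
      (v j) ^ (N : ℕ) * qR u / (u ^ (N : ℕ) * deriv qR (v j)) * (1 / (v j - u)) := by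
    intro j
    rw [hflip (fun a b => (v b) ^ (-(a : ℤ) - 1)) j (fun a => u ^ (-(a : ℤ) - 1))]
    have hmeq : (Matrix.of fun a b : Fin N =>
        if b = j then u ^ (-(a : ℤ) - 1) else (v b) ^ (-(a : ℤ) - 1)) =
        Matrix.of fun a b : Fin N => (Function.update v j u b) ^ (-(a : ℤ) - 1) := by
      ext a b
      rcases eq_or_ne b j with h | h
      · simp [h]
      · simp [h, Function.update_of_ne h]
    rw [hmeq, hdetVw j, hdetV, hderiv j, hqRu j]
    have hvju : v j - u ≠ 0 := sub_ne_zero_of_ne (Ne.symm (huv j))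
    rw [zpow_neg, zpow_neg, zpow_natCast, zpow_natCast, hprodveq j]
    have h1 : (u * ∏ b ∈ Finset.univ.erase j, v b) ^ N ≠ 0 :=
      pow_ne_zero _ (mul_ne_zero hu0 (hQ j))
    have h2 : (v j * ∏ b ∈ Finset.univ.erase j, v b) ^ N ≠ 0 :=
      pow_ne_zero _ (mul_ne_zero (hv0 j) (hQ j))
    have h3 : (∏ b ∈ Finset.univ.erase j, v b) ^ N ≠ 0 := pow_ne_zero _ (hQ j)
    have h4 : (u : ℂ) ^ N ≠ 0 := pow_ne_zero _ hu0
    field_simp [hε, hPv, hE j, hvju, h3, h4, mul_pow]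
    linear_combination (-(1 : ℂ) * v j ^ N * (∏ b ∈ Finset.univ.erase j, v b) ^ N * u ^ N *
      (v j - u)) * hkey j
  have hAab : ∀ a b, A a b = (v b) ^ (-(a : ℤ) - 1) * (v b + 1) ^ (y a + (a : ℤ) + 1) :=
    fun a b => rfl
  have part2 : ∀ j : Fin N,
      Matrix.det (Matrix.of fun a b =>
          if b = j then -(u ^ (-(a : ℤ) - 1) * (u + 1) ^ (y a + (a : ℤ) + 1))
          else A a b) / Matrix.det A =
      Gl (Function.update v j u) / Gl v *
        ((v j) ^ (N : ℕ) * qR u / (u ^ (N : ℕ) * deriv qR (v j) * (v j - u))) := by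
    intro j
    set Aw : Matrix (Fin N) (Fin N) ℂ := Matrix.of fun a b =>
      (Function.update v j u b) ^ (-(a : ℤ) - 1) *
        (Function.update v j u b + 1) ^ (y a + (a : ℤ) + 1) with hAwdef
    set Vw : Matrix (Fin N) (Fin N) ℂ := Matrix.of fun a b =>
      (Function.update v j u b) ^ (-(a : ℤ) - 1) with hVwdef
    have hvju : v j - u ≠ 0 := sub_ne_zero_of_ne (Ne.symm (huv j))
    have huvj : u - v j ≠ 0 := sub_ne_zero_of_ne (huv j)
    have h4 : (u : ℂ) ^ N ≠ 0 := pow_ne_zero _ hu0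
    -- flip the sign out of the replaced column
    rw [hflip (fun a b => A a b) j
      (fun a => u ^ (-(a : ℤ) - 1) * (u + 1) ^ (y a + (a : ℤ) + 1))]
    have hmeq2 : (Matrix.of fun a b : Fin N =>
        if b = j then u ^ (-(a : ℤ) - 1) * (u + 1) ^ (y a + (a : ℤ) + 1) else A a b) = Aw := by
      ext a b
      rcases eq_or_ne b j with h | h
      · simp [hAwdef, h]
      · simp [hAwdef, h, Function.update_of_ne h, hAab]
    rw [hmeq2]
    -- value of det Vw from part 1
    have e1 : -(Matrix.det Vw) / Matrix.det V =
        (v j) ^ (N : ℕ) * qR u / (u ^ (N : ℕ) * deriv qR (v j)) * (1 / (v j - u)) := by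
      have hp := part1 j
      rw [hflip (fun a b => (v b) ^ (-(a : ℤ) - 1)) j (fun a => u ^ (-(a : ℤ) - 1))] at hp
      have hmeq : (Matrix.of fun a b : Fin N =>
          if b = j then u ^ (-(a : ℤ) - 1) else (v b) ^ (-(a : ℤ) - 1)) = Vw := by
        ext a b
        rcases eq_or_ne b j with h | h
        · simp [hVwdef, h]
        · simp [hVwdef, h, Function.update_of_ne h]
      rwa [hmeq] at hp
    have hVwval : Matrix.det Vw =
        -((v j) ^ (N : ℕ) * qR u / (u ^ (N : ℕ) * deriv qR (v j)) * (1 / (v j - u)) *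
          Matrix.det V) := by
      have := (div_eq_iff hdetV0).mp e1
      linear_combination -this
    have hGlw : Gl (Function.update v j u) = Matrix.det Aw / Matrix.det Vw := rfl
    have hGlv : Gl v = Matrix.det A / Matrix.det V := rfl
    rw [hGlw, hGlv, hVwval]
    have h5 : (v j : ℂ) ^ N ≠ 0 := pow_ne_zero _ (hv0 j)
    have hX : (v j) ^ (N : ℕ) * qR u / (u ^ (N : ℕ) * deriv qR (v j)) * (1 / (v j - u)) =
        (v j) ^ (N : ℕ) * qR u / (u ^ (N : ℕ) * deriv qR (v j) * (v j - u)) := by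
      rw [div_mul_div_comm, mul_one]
    rw [hX]
    obtain ⟨t, ht0, hteq⟩ : ∃ t : ℂ, t ≠ 0 ∧
        (v j) ^ (N : ℕ) * qR u / (u ^ (N : ℕ) * deriv qR (v j) * (v j - u)) = t := by
      refine ⟨_, ?_, rfl⟩
      refine div_ne_zero (mul_ne_zero h5 ?_) (mul_ne_zero (mul_ne_zero h4 ?_) hvju)
      · rw [hqRu j]; exact mul_ne_zero huvj (hF j)
      · rw [hderiv j]; exact hE j
    rw [hteq]
    obtain ⟨dA, hdA0, hdAeq⟩ : ∃ dA : ℂ, dA ≠ 0 ∧ Matrix.det A = dA := ⟨_, hA, rfl⟩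
    obtain ⟨dV, hdV0, hdVeq⟩ : ∃ dV : ℂ, dV ≠ 0 ∧ Matrix.det V = dV := ⟨_, hdetV0, rfl⟩
    obtain ⟨dAw, hdAweq⟩ : ∃ dAw : ℂ, Matrix.det Aw = dAw := ⟨_, rfl⟩
    rw [hdAeq, hdVeq, hdAweq]
    field_simp [hdA0, hdV0, ht0]
  have hAunit : IsUnit (Matrix.det A) := isUnit_iff_ne_zero.mpr hA
  have hsum : ∀ (c : Fin N → ℂ) (a : Fin N), (∑ b : Fin N, A a b * c b) = (A.mulVec c) a :=
    fun c a => rfl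
  obtain ⟨rhsv, hrhsv⟩ : ∃ rhsv : Fin N → ℂ, rhsv = fun a : Fin N =>
      -(u ^ (-(a : ℤ) - 1) * (u + 1) ^ (y a + (a : ℤ) + 1)) := ⟨_, rfl⟩
  have hsolve : ∀ c : Fin N → ℂ,
      (∀ a : Fin N, (∑ b : Fin N, A a b * c b) =
        -(u ^ (-(a : ℤ) - 1) * (u + 1) ^ (y a + (a : ℤ) + 1))) ↔ A.mulVec c = rhsv := by
    intro c
    constructor
    · intro h
      funext a
      rw [← hsum c a, h a, hrhsv]
    · intro h a
      rw [hsum c a, h, hrhsv]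
  have huniq : ∀ c : Fin N → ℂ, A.mulVec c = rhsv → c = A⁻¹.mulVec rhsv := by
    intro c h
    rw [← h, Matrix.mulVec_mulVec, Matrix.nonsing_inv_mul A hAunit, Matrix.one_mulVec]
  have hex : A.mulVec (A⁻¹.mulVec rhsv) = rhsv := by
    rw [Matrix.mulVec_mulVec, Matrix.mul_nonsing_inv A hAunit, Matrix.one_mulVec]
  refine ⟨part1, part2, ⟨A⁻¹.mulVec rhsv, (hsolve _).mpr hex, fun c hc => huniq c ((hsolve c).mp hc)⟩,
    ?_⟩
  intro c hc j
  have hAc : A.mulVec c = rhsv := (hsolve c).mp hc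
  have hcram : Matrix.det A * c j = Matrix.det (A.updateCol j rhsv) := by
    have h1 : Matrix.cramer A rhsv = Matrix.det A • c := by
      rw [← hAc, Matrix.cramer_eq_adjugate_mulVec, Matrix.mulVec_mulVec, Matrix.adjugate_mul,
        Matrix.smul_mulVec, Matrix.one_mulVec]
    have h2 := congrFun h1 j
    rw [Matrix.cramer_apply] at h2
    rw [h2, Pi.smul_apply, smul_eq_mul]
  have hupd : A.updateCol j rhsv = Matrix.of fun (a b : Fin N) =>
      if b = j then -(u ^ (-(a : ℤ) - 1) * (u + 1) ^ (y a + (a : ℤ) + 1)) else A a b := by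
    ext a b
    rw [Matrix.updateCol_apply]
    rcases eq_or_ne b j with h | h
    · simp [h, hrhsv]
    · simp [h]
  have := part2 j
  rw [← hupd] at this
  rw [← this, ← hcram]
  field_simp
end
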